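/- arXiv:1912.10111 — 5 statements merged into one kernel-verified Lean document; each statement's English description precedes it below -/
import Mathlib

section
/- Let μ be a Borel probability measure on [0,1] with μ₂ > 0 and let (f,g),(F,G) ∈ C_2(I). If for all x ∈ I, m_{x;f,g;μ}''(0)=m_{x;F,G;μ}''(0), then Φ_{f,g}=Φ_{F,G} holds on I. -/
open MeasureTheory Set

/-- The generalized quasiarithmetic mean `M_{f,g;μ}` on the interval `I`. -/
noncomputable def Mmean (I : Set ℝ) (f g : ℝ → ℝ) (μ : Measure ℝ) (x y : ℝ) : ℝ :=
  Function.invFunOn (fun t => f t / g t) I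
    ((∫ t in Set.Icc (0:ℝ) 1, f (t * x + (1 - t) * y) ∂μ) /
      (∫ t in Set.Icc (0:ℝ) 1, g (t * x + (1 - t) * y) ∂μ))

/-- First moment `μ̂₁` of a measure on `[0,1]`. -/
noncomputable def mom1 (μ : Measure ℝ) : ℝ := ∫ t in Set.Icc (0:ℝ) 1, t ∂μ

/-- `n`-th centralized moment `μ_n` of a measure on `[0,1]`. -/
noncomputable def cmom (μ : Measure ℝ) (n : ℕ) : ℝ :=
  ∫ t in Set.Icc (0:ℝ) 1, (t - mom1 μ) ^ n ∂μ

/-- The auxiliary function `m_{x;f,g;μ}`. -/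
noncomputable def mfun (I : Set ℝ) (f g : ℝ → ℝ) (μ : Measure ℝ) (x : ℝ) : ℝ → ℝ :=
  fun u => Mmean I f g μ (x + (1 - mom1 μ) * u) (x - mom1 μ * u)

/-- The `(i,j)`-order Wronskian `W^{i,j}_{f,g} = f⁽ⁱ⁾g⁽ʲ⁾ − f⁽ʲ⁾g⁽ⁱ⁾`. -/
noncomputable def Wr (i j : ℕ) (f g : ℝ → ℝ) : ℝ → ℝ :=
  fun x => iteratedDeriv i f x * iteratedDeriv j g x - iteratedDeriv j f x * iteratedDeriv i g x

/-- `Φ_{f,g} = W^{2,0}/W^{1,0}`. -/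
noncomputable def Phi (f g : ℝ → ℝ) : ℝ → ℝ := fun x => Wr 2 0 f g x / Wr 1 0 f g x

/-- `Ψ_{f,g} = −W^{2,1}/W^{1,0}`. -/
noncomputable def Psi (f g : ℝ → ℝ) : ℝ → ℝ := fun x => -(Wr 2 1 f g x / Wr 1 0 f g x)

/-- The class `𝒞_n(I)` for `n ≥ 1`. -/
def ClassC (n : ℕ) (I : Set ℝ) (f g : ℝ → ℝ) : Prop :=
  ContDiffOn ℝ n f I ∧ ContDiffOn ℝ n g I ∧ (∀ x ∈ I, 0 < g x) ∧
    ∀ x ∈ I, Wr 1 0 f g x ≠ 0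

/-- The class `𝒞₀(I)`. -/
def ClassC0 (I : Set ℝ) (f g : ℝ → ℝ) : Prop :=
  ContinuousOn f I ∧ ContinuousOn g I ∧ (∀ x ∈ I, 0 < g x) ∧
    (StrictMonoOn (fun x => f x / g x) I ∨ StrictAntiOn (fun x => f x / g x) I)

/-- Equivalence of pairs: `(f,g) ∼ (F,G)`. -/
def EquivPair (I : Set ℝ) (f g F G : ℝ → ℝ) : Prop :=
  ∃ a b c d : ℝ, a * d ≠ b * c ∧
    ∀ x ∈ I, F x = a * f x + b * g x ∧ G x = c * f x + d * g x

/-- Equality of two two-variable means near the diagonal of `I²`. -/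
def EqualNearDiag (I : Set ℝ) (M N : ℝ → ℝ → ℝ) : Prop :=
  ∃ U : Set (ℝ × ℝ), IsOpen U ∧ U ⊆ I ×ˢ I ∧
    I ⊆ closure {y | y ∈ I ∧ (y, y) ∈ U} ∧
    ∀ p ∈ U, M p.1 p.2 = N p.1 p.2

/-- The quasiarithmetic mean `A_φ`. -/
noncomputable def QAmean (I : Set ℝ) (φ : ℝ → ℝ) (x y : ℝ) : ℝ :=
  Function.invFunOn φ I ((φ x + φ y) / 2)

/-- The sine-type function `S_t`. -/
noncomputable def Sfun (t x : ℝ) : ℝ :=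
  if t < 0 then Real.sin (Real.sqrt (-t) * x)
  else if t = 0 then x
  else Real.sinh (Real.sqrt t * x)

/-- The cosine-type function `C_t`. -/
noncomputable def Cfun (t x : ℝ) : ℝ :=
  if t < 0 then Real.cos (Real.sqrt (-t) * x)
  else if t = 0 then 1
  else Real.cosh (Real.sqrt t * x)

/-- The real (sign-preserving) cube root. -/
noncomputable def cbrt (x : ℝ) : ℝ :=
  if x < 0 then -((-x) ^ ((1:ℝ)/3)) else x ^ ((1:ℝ)/3)

open Filter Metric Function
open scoped Topology

noncomputable def Nfun (μ : Measure ℝ) (m₁ x : ℝ) (f : ℝ → ℝ) : ℝ → ℝ :=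
  fun u => ∫ t in Set.Icc (0:ℝ) 1, f (x + (t - m₁) * u) ∂μ

noncomputable def N1fun (μ : Measure ℝ) (m₁ x : ℝ) (f : ℝ → ℝ) : ℝ → ℝ :=
  fun u => ∫ t in Set.Icc (0:ℝ) 1, (t - m₁) * deriv f (x + (t - m₁) * u) ∂μ

lemma aux_one (μ : Measure ℝ) [IsFiniteMeasure μ] {I : Set ℝ}
    (m₁ : ℝ) {x δ : ℝ} (hδ : 0 < δ) (hsub : closedBall x δ ⊆ I)
    (p q : ℝ → ℝ) (hpc : ContinuousOn p I) (hqc : ContinuousOn q I)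
    (hpq : ∀ y ∈ I, HasDerivAt p (q y) y)
    (c : ℝ → ℝ) (hc : Continuous c) (hcb : ∀ t ∈ Set.Icc (0:ℝ) 1, |c t| ≤ 1 + |m₁|) :
    ∀ u₀ ∈ ball (0:ℝ) (δ / (1 + |m₁|)),
      HasDerivAt (fun v => ∫ t in Set.Icc (0:ℝ) 1, c t * p (x + (t - m₁) * v) ∂μ)
        (∫ t in Set.Icc (0:ℝ) 1, c t * ((t - m₁) * q (x + (t - m₁) * u₀)) ∂μ) u₀ := by
  intro u₀ hu₀
  have hK : (0:ℝ) < 1 + |m₁| := by positivity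
  have hu₀' : |u₀| < δ / (1 + |m₁|) := by simpa [Real.dist_eq] using hu₀
  set ρ : ℝ := δ / (1 + |m₁|) - |u₀| with hρdef
  have hρ : 0 < ρ := sub_pos.2 hu₀'
  have habs : ∀ t ∈ Set.Icc (0:ℝ) 1, |t - m₁| ≤ 1 + |m₁| := by
    intro t ht
    have h1 : |t| ≤ 1 := abs_le.2 ⟨by linarith [ht.1], ht.2⟩
    calc |t - m₁| ≤ |t| + |m₁| := abs_sub t m₁
      _ ≤ 1 + |m₁| := by linarith
  have hmem : ∀ t ∈ Set.Icc (0:ℝ) 1, ∀ u ∈ ball u₀ ρ, x + (t - m₁) * u ∈ closedBall x δ := by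
    intro t ht u hu
    have h2 : |u - u₀| < ρ := by simpa [Real.dist_eq] using hu
    have h3 : |u| < δ / (1 + |m₁|) := by
      calc |u| = |(u - u₀) + u₀| := by ring_nf
        _ ≤ |u - u₀| + |u₀| := abs_add_le _ _
        _ < ρ + |u₀| := by linarith
        _ = δ / (1 + |m₁|) := by simp [hρdef]
    have h4 : |(t - m₁) * u| ≤ δ := by
      rw [abs_mul]
      calc |t - m₁| * |u| ≤ (1 + |m₁|) * (δ / (1 + |m₁|)) :=
            mul_le_mul (habs t ht) h3.le (abs_nonneg _) hK.le
        _ = δ := by field_simp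
    simp only [mem_closedBall, Real.dist_eq]
    simpa using h4
  obtain ⟨B, hB⟩ := (isCompact_closedBall x δ).exists_bound_of_continuousOn (hqc.mono hsub)
  have hB0 : 0 ≤ B := (norm_nonneg (q x)).trans (hB x (mem_closedBall_self hδ.le))
  have hcontF : ∀ u ∈ ball u₀ ρ,
      ContinuousOn (fun t => c t * p (x + (t - m₁) * u)) (Set.Icc (0:ℝ) 1) := by
    intro u hu
    refine hc.continuousOn.mul (hpc.comp (by fun_prop) ?_)
    intro t ht
    exact hsub (hmem t ht u hu)
  have hcontF' : ContinuousOn (fun t => c t * ((t - m₁) * q (x + (t - m₁) * u₀)))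
      (Set.Icc (0:ℝ) 1) := by
    refine hc.continuousOn.mul (ContinuousOn.mul (by fun_prop) (hqc.comp (by fun_prop) ?_))
    intro t ht
    exact hsub (hmem t ht u₀ (mem_ball_self hρ))
  refine (hasDerivAt_integral_of_dominated_loc_of_deriv_le (μ := μ.restrict (Set.Icc (0:ℝ) 1))
    (F := fun v t => c t * p (x + (t - m₁) * v))
    (F' := fun v t => c t * ((t - m₁) * q (x + (t - m₁) * v)))
    (bound := fun _ => (1 + |m₁|) * ((1 + |m₁|) * B)) (ball_mem_nhds u₀ hρ) ?_ ?_ ?_ ?_ ?_ ?_).2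
  · filter_upwards [isOpen_ball.eventually_mem (mem_ball_self hρ)] with u hu
    exact (hcontF u hu).aestronglyMeasurable measurableSet_Icc
  · exact (hcontF u₀ (mem_ball_self hρ)).integrableOn_compact isCompact_Icc
  · exact hcontF'.aestronglyMeasurable measurableSet_Icc
  · filter_upwards [ae_restrict_mem measurableSet_Icc] with t ht
    intro u hu
    have hy : x + (t - m₁) * u ∈ closedBall x δ := hmem t ht u hu
    have : ‖q (x + (t - m₁) * u)‖ ≤ B := hB _ hy
    have h5 : |c t * ((t - m₁) * q (x + (t - m₁) * u))| ≤ (1 + |m₁|) * ((1 + |m₁|) * B) := by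
      rw [abs_mul, abs_mul]
      have e1 := habs t ht
      have e2 : |q (x + (t - m₁) * u)| ≤ B := this
      have e3 : |c t| ≤ 1 + |m₁| := hcb t ht
      have := mul_le_mul e1 e2 (abs_nonneg _) hK.le
      exact mul_le_mul e3 this (by positivity) hK.le
    simpa [abs_mul] using h5
  · exact integrable_const _
  · filter_upwards [ae_restrict_mem measurableSet_Icc] with t ht
    intro u hu
    have hy : x + (t - m₁) * u ∈ I := hsub (hmem t ht u hu)
    have h1 : HasDerivAt (fun v : ℝ => x + (t - m₁) * v) (t - m₁) u := by
      simpa using ((hasDerivAt_id u).const_mul (t - m₁)).const_add x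
    have h2 := ((hpq _ hy).comp u h1).const_mul (c t)
    rw [show c t * ((t - m₁) * q (x + (t - m₁) * u)) = c t * (q (x + (t - m₁) * u) * (t - m₁)) by ring]
    exact h2

lemma aux_two (μ : Measure ℝ) [IsFiniteMeasure μ] {I : Set ℝ} (hIopen : IsOpen I)
    (m₁ : ℝ) {x δ : ℝ} (hδ : 0 < δ) (hsub : closedBall x δ ⊆ I)
    (h : ℝ → ℝ) (hh : ContDiffOn ℝ 2 h I) :
    ∀ u₀ ∈ ball (0:ℝ) (δ / (1 + |m₁|)),
      HasDerivAt (Nfun μ m₁ x h) (N1fun μ m₁ x h u₀) u₀ ∧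
      HasDerivAt (N1fun μ m₁ x h)
        (∫ t in Set.Icc (0:ℝ) 1,
          (t - m₁) * ((t - m₁) * deriv (deriv h) (x + (t - m₁) * u₀)) ∂μ) u₀ := by
  have hh1 : ContDiffOn ℝ 1 (deriv h) I := hh.deriv_of_isOpen hIopen (by norm_num)
  have hhc : ContinuousOn h I := hh.continuousOn
  have hh1c : ContinuousOn (deriv h) I := hh1.continuousOn
  have hh2c : ContinuousOn (deriv (deriv h)) I :=
    (hh1.deriv_of_isOpen (m := 0) hIopen (by norm_num)).continuousOn
  have hd1 : ∀ y ∈ I, HasDerivAt h (deriv h y) y := fun y hy =>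
    ((hh.contDiffAt (hIopen.mem_nhds hy)).differentiableAt (by norm_num)).hasDerivAt
  have hd2 : ∀ y ∈ I, HasDerivAt (deriv h) (deriv (deriv h) y) y := fun y hy =>
    ((hh1.contDiffAt (hIopen.mem_nhds hy)).differentiableAt (by norm_num)).hasDerivAt
  intro u₀ hu₀
  constructor
  · have := aux_one μ m₁ hδ hsub h (deriv h) hhc hh1c hd1 (fun _ => (1:ℝ)) continuous_const
      (fun t _ => by simp) u₀ hu₀
    simp only [one_mul] at this; exact this
  · have habs : ∀ t ∈ Set.Icc (0:ℝ) 1, |t - m₁| ≤ 1 + |m₁| := by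
      intro t ht
      have h1 : |t| ≤ 1 := abs_le.2 ⟨by linarith [ht.1], ht.2⟩
      calc |t - m₁| ≤ |t| + |m₁| := abs_sub t m₁
        _ ≤ 1 + |m₁| := by linarith
    have := aux_one μ m₁ hδ hsub (deriv h) (deriv (deriv h)) hh1c hh2c hd2
      (fun t => t - m₁) (by fun_prop) habs u₀ hu₀
    exact this


lemma key_lemma (I : Set ℝ) (hIopen : IsOpen I) (hIconn : I.OrdConnected)
    (μ : Measure ℝ) [IsProbabilityMeasure μ] (hsupp : μ (Set.Icc (0:ℝ) 1)ᶜ = 0)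
    (f g : ℝ → ℝ) (hfg : ClassC 2 I f g) {x : ℝ} (hx : x ∈ I) :
    iteratedDeriv 2 (mfun I f g μ x) 0 = cmom μ 2 * Phi f g x := by
  obtain ⟨hfC, hgC, hgpos, hWne⟩ := hfg
  set m₁ : ℝ := mom1 μ with hm₁
  set φ : ℝ → ℝ := fun y => f y / g y with hφdef
  -- the restricted measure is a probability measure
  have hIcc1 : μ (Set.Icc (0:ℝ) 1) = 1 := by
    have h := measure_add_measure_compl (μ := μ) (measurableSet_Icc (a := (0:ℝ)) (b := 1))
    rw [hsupp, add_zero, measure_univ] at h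
    exact h
  haveI hprob : IsProbabilityMeasure (μ.restrict (Set.Icc (0:ℝ) 1)) := by
    constructor; rw [Measure.restrict_apply_univ]; exact hIcc1
  -- first centralized moment vanishes
  have hmom0 : (∫ t in Set.Icc (0:ℝ) 1, (t - m₁) ∂μ) = 0 := by
    have hintid : IntegrableOn (fun t : ℝ => t) (Set.Icc (0:ℝ) 1) μ :=
      (continuous_id.continuousOn :
        ContinuousOn (fun t : ℝ => t) (Set.Icc (0:ℝ) 1)).integrableOn_compact isCompact_Icc
    rw [integral_sub hintid (integrable_const _)]
    have h1 : (∫ t in Set.Icc (0:ℝ) 1, t ∂μ) = m₁ := rfl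
    rw [h1, setIntegral_const, measureReal_def, hIcc1]
    simp
  obtain ⟨δ, hδpos, hδsub⟩ : ∃ δ > 0, closedBall x δ ⊆ I :=
    (Metric.nhds_basis_closedBall.mem_iff).1 (hIopen.mem_nhds hx)
  have hε : 0 < δ / (1 + |m₁|) := by positivity
  have hball0 : (0:ℝ) ∈ ball (0:ℝ) (δ / (1 + |m₁|)) := mem_ball_self hε
  have HF := aux_two μ hIopen m₁ hδpos hδsub f hfC
  have HG := aux_two μ hIopen m₁ hδpos hδsub g hgC
  -- values at 0
  have hN0 : Nfun μ m₁ x f 0 = f x := by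
    simp only [Nfun, mul_zero, add_zero]
    rw [setIntegral_const, measureReal_def, hIcc1]; simp
  have hD0 : Nfun μ m₁ x g 0 = g x := by
    simp only [Nfun, mul_zero, add_zero]
    rw [setIntegral_const, measureReal_def, hIcc1]; simp
  have hN10 : N1fun μ m₁ x f 0 = 0 := by
    simp only [N1fun, mul_zero, add_zero]
    rw [integral_mul_const, hmom0, zero_mul]
  have hD10 : N1fun μ m₁ x g 0 = 0 := by
    simp only [N1fun, mul_zero, add_zero]
    rw [integral_mul_const, hmom0, zero_mul]
  have hN20 : (∫ t in Set.Icc (0:ℝ) 1,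
      (t - m₁) * ((t - m₁) * deriv (deriv f) (x + (t - m₁) * 0)) ∂μ)
      = cmom μ 2 * deriv (deriv f) x := by
    rw [integral_congr_ae (ae_of_all _ fun t =>
      (by rw [mul_zero, add_zero]; ring :
        (t - m₁) * ((t - m₁) * deriv (deriv f) (x + (t - m₁) * 0))
          = (t - m₁) ^ 2 * deriv (deriv f) x))]
    rw [integral_mul_const, hm₁]
    rw [show (∫ t in Set.Icc (0:ℝ) 1, (t - mom1 μ) ^ 2 ∂μ) = cmom μ 2 from rfl]
  have hD20 : (∫ t in Set.Icc (0:ℝ) 1,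
      (t - m₁) * ((t - m₁) * deriv (deriv g) (x + (t - m₁) * 0)) ∂μ)
      = cmom μ 2 * deriv (deriv g) x := by
    rw [integral_congr_ae (ae_of_all _ fun t =>
      (by rw [mul_zero, add_zero]; ring :
        (t - m₁) * ((t - m₁) * deriv (deriv g) (x + (t - m₁) * 0))
          = (t - m₁) ^ 2 * deriv (deriv g) x))]
    rw [integral_mul_const, hm₁]
    rw [show (∫ t in Set.Icc (0:ℝ) 1, (t - mom1 μ) ^ 2 ∂μ) = cmom μ 2 from rfl]
  -- derivative facts at 0
  have hNd0 : HasDerivAt (Nfun μ m₁ x f) 0 0 := by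
    have := (HF 0 hball0).1; rwa [hN10] at this
  have hDd0 : HasDerivAt (Nfun μ m₁ x g) 0 0 := by
    have := (HG 0 hball0).1; rwa [hD10] at this
  have hN1d0 : HasDerivAt (N1fun μ m₁ x f) (cmom μ 2 * deriv (deriv f) x) 0 := by
    have := (HF 0 hball0).2; rwa [hN20] at this
  have hD1d0 : HasDerivAt (N1fun μ m₁ x g) (cmom μ 2 * deriv (deriv g) x) 0 := by
    have := (HG 0 hball0).2; rwa [hD20] at this
  have hgx : 0 < g x := hgpos x hx
  have hgne : ∀ y ∈ I, g y ≠ 0 := fun y hy => (hgpos y hy).ne'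
  -- Wronskian formulas
  have hWr1 : ∀ y, Wr 1 0 f g y = deriv f y * g y - f y * deriv g y := by
    intro y; simp [Wr, iteratedDeriv_one, iteratedDeriv_zero]
  have hWr2 : ∀ y, Wr 2 0 f g y = deriv (deriv f) y * g y - f y * deriv (deriv g) y := by
    intro y
    have h2f : iteratedDeriv 2 f = deriv (deriv f) := by
      rw [show (2:ℕ) = 1 + 1 from rfl, iteratedDeriv_succ, iteratedDeriv_one]
    have h2g : iteratedDeriv 2 g = deriv (deriv g) := by
      rw [show (2:ℕ) = 1 + 1 from rfl, iteratedDeriv_succ, iteratedDeriv_one]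
    simp [Wr, h2f, h2g, iteratedDeriv_zero]
  have hWne' : ∀ y ∈ I, deriv f y * g y - f y * deriv g y ≠ 0 := by
    intro y hy; rw [← hWr1]; exact hWne y hy
  -- derivatives of f, g, φ on I
  have hfd : ∀ y ∈ I, HasDerivAt f (deriv f y) y := fun y hy =>
    ((hfC.contDiffAt (hIopen.mem_nhds hy)).differentiableAt (by norm_num)).hasDerivAt
  have hgd : ∀ y ∈ I, HasDerivAt g (deriv g y) y := fun y hy =>
    ((hgC.contDiffAt (hIopen.mem_nhds hy)).differentiableAt (by norm_num)).hasDerivAt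
  have hφd : ∀ y ∈ I, HasDerivAt φ
      ((deriv f y * g y - f y * deriv g y) / g y ^ 2) y := fun y hy =>
    (hfd y hy).div (hgd y hy) (hgne y hy)
  -- injectivity of φ on I
  have hconv : Convex ℝ I := convex_iff_ordConnected.mpr hIconn
  have hf1c : ContinuousOn (deriv f) I :=
    (hfC.deriv_of_isOpen (m := 1) hIopen (by norm_num)).continuousOn
  have hg1c : ContinuousOn (deriv g) I :=
    (hgC.deriv_of_isOpen (m := 1) hIopen (by norm_num)).continuousOn
  have hWcont : ContinuousOn (fun y => deriv f y * g y - f y * deriv g y) I :=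
    (hf1c.mul hgC.continuousOn).sub (hfC.continuousOn.mul hg1c)
  have hsign : (∀ y ∈ I, 0 < deriv f y * g y - f y * deriv g y) ∨
      (∀ y ∈ I, deriv f y * g y - f y * deriv g y < 0) := by
    by_contra hcon
    push_neg at hcon
    obtain ⟨⟨a, ha, ha'⟩, ⟨b, hb, hb'⟩⟩ := hcon
    have ha2 : deriv f a * g a - f a * deriv g a < 0 := ha'.lt_of_ne (hWne' a ha)
    have hb2 : 0 < deriv f b * g b - f b * deriv g b := hb'.lt_of_ne (Ne.symm (hWne' b hb))
    have hsubI : uIcc a b ⊆ I := hIconn.uIcc_subset ha hb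
    have h0 : (0:ℝ) ∈ uIcc (deriv f a * g a - f a * deriv g a)
        (deriv f b * g b - f b * deriv g b) := by
      rw [Set.mem_uIcc]; exact Or.inl ⟨ha2.le, hb2.le⟩
    obtain ⟨y, hy, hy0⟩ := intermediate_value_uIcc (hWcont.mono hsubI) h0
    exact hWne' y (hsubI hy) hy0
  have hInj : InjOn φ I := by
    have hφcont : ContinuousOn φ I := hfC.continuousOn.div hgC.continuousOn hgne
    rcases hsign with hpos | hneg
    · refine (strictMonoOn_of_deriv_pos hconv hφcont ?_).injOn
      intro y hy
      rw [hIopen.interior_eq] at hy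
      rw [(hφd y hy).deriv]
      exact div_pos (hpos y hy) (pow_pos (hgpos y hy) 2)
    · refine (strictAntiOn_of_deriv_neg hconv hφcont ?_).injOn
      intro y hy
      rw [hIopen.interior_eq] at hy
      rw [(hφd y hy).deriv]
      exact div_neg_of_neg_of_pos (hneg y hy) (pow_pos (hgpos y hy) 2)
  -- local inverse
  set c : ℝ := (deriv f x * g x - f x * deriv g x) / g x ^ 2 with hcdef
  have hcne : c ≠ 0 := div_ne_zero (hWne' x hx) (pow_ne_zero 2 hgx.ne')
  have hφC2 : ContDiffAt ℝ 2 φ x :=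
    (hfC.contDiffAt (hIopen.mem_nhds hx)).div (hgC.contDiffAt (hIopen.mem_nhds hx)) hgx.ne'
  have hstrict : HasStrictDerivAt φ c x := by
    have h := hφC2.hasStrictDerivAt (by norm_num)
    rwa [(hφd x hx).deriv] at h
  have hse : HasStrictFDerivAt φ
      (ContinuousLinearEquiv.unitsEquivAut ℝ (Units.mk0 c hcne) : ℝ →L[ℝ] ℝ) x :=
    hstrict.hasStrictFDerivAt_equiv hcne
  set L : ℝ → ℝ := hse.localInverse φ _ x with hLdef
  have hLx : L (φ x) = x := hse.localInverse_apply_image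
  have hLd1 : HasStrictDerivAt L c⁻¹ (φ x) := hstrict.to_localInverse hcne
  have hLC2 : ContDiffAt ℝ 2 L (φ x) := by
    have hfd' : HasFDerivAt φ
        (ContinuousLinearEquiv.unitsEquivAut ℝ (Units.mk0 c hcne) : ℝ →L[ℝ] ℝ) x :=
      (hstrict.hasDerivAt).hasFDerivAt_equiv hcne
    exact hφC2.to_localInverse hfd' (by norm_num)
  have hLcont : ContinuousAt L (φ x) := hse.localInverse_continuousAt
  have hLmem : ∀ᶠ w in 𝓝 (φ x), L w ∈ I := by
    have hmem : I ∈ 𝓝 (L (φ x)) := by rw [hLx]; exact hIopen.mem_nhds hx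
    exact hLcont.eventually_mem hmem
  have hLright : ∀ᶠ w in 𝓝 (φ x), φ (L w) = w := hse.eventually_right_inverse
  have hinveq : ∀ᶠ w in 𝓝 (φ x), Function.invFunOn φ I w = L w := by
    filter_upwards [hLmem, hLright] with w h1 h2
    conv_lhs => rw [← h2]
    exact hInj.leftInvOn_invFunOn h1
  -- identification of mfun
  have hmr : ∀ u : ℝ, mfun I f g μ x u =
      Function.invFunOn φ I (Nfun μ m₁ x f u / Nfun μ m₁ x g u) := by
    intro u
    have e1 : (∫ t in Set.Icc (0:ℝ) 1,
        f (t * (x + (1 - mom1 μ) * u) + (1 - t) * (x - mom1 μ * u)) ∂μ) = Nfun μ m₁ x f u := by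
      unfold Nfun
      exact integral_congr_ae (ae_of_all _ fun t => by rw [hm₁]; congr 1; ring)
    have e2 : (∫ t in Set.Icc (0:ℝ) 1,
        g (t * (x + (1 - mom1 μ) * u) + (1 - t) * (x - mom1 μ * u)) ∂μ) = Nfun μ m₁ x g u := by
      unfold Nfun
      exact integral_congr_ae (ae_of_all _ fun t => by rw [hm₁]; congr 1; ring)
    show Function.invFunOn (fun t => f t / g t) I _ = _
    rw [e1, e2]
  -- nonvanishing of the denominator near 0
  have hDne : ∀ᶠ u in 𝓝 (0:ℝ), Nfun μ m₁ x g u ≠ 0 := by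
    have hcont : ContinuousAt (Nfun μ m₁ x g) 0 := (HG 0 hball0).1.continuousAt
    have hne : Nfun μ m₁ x g 0 ≠ 0 := by rw [hD0]; exact hgx.ne'
    exact hcont.eventually_ne hne
  -- derivative of the quotient near 0
  have hrd : ∀ᶠ u in 𝓝 (0:ℝ), HasDerivAt (fun v => Nfun μ m₁ x f v / Nfun μ m₁ x g v)
      ((N1fun μ m₁ x f u * Nfun μ m₁ x g u - Nfun μ m₁ x f u * N1fun μ m₁ x g u) /
        Nfun μ m₁ x g u ^ 2) u := by
    filter_upwards [ball_mem_nhds (0:ℝ) hε, hDne] with u hu hDu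
    exact ((HF u hu).1).div ((HG u hu).1) hDu
  have hr00 : Nfun μ m₁ x f 0 / Nfun μ m₁ x g 0 = φ x := by
    rw [hN0, hD0, hφdef]
  have hr'0 : (N1fun μ m₁ x f 0 * Nfun μ m₁ x g 0 - Nfun μ m₁ x f 0 * N1fun μ m₁ x g 0) /
      Nfun μ m₁ x g 0 ^ 2 = 0 := by rw [hN10, hD10]; ring
  have hr0d : HasDerivAt (fun v => Nfun μ m₁ x f v / Nfun μ m₁ x g v) 0 0 := by
    have h := ((HF 0 hball0).1).div ((HG 0 hball0).1) (by rw [hD0]; exact hgx.ne')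
    rwa [hr'0] at h
  -- second-derivative data for the quotient
  have hnum : HasDerivAt (fun u => N1fun μ m₁ x f u * Nfun μ m₁ x g u -
      Nfun μ m₁ x f u * N1fun μ m₁ x g u)
      ((cmom μ 2 * deriv (deriv f) x) * Nfun μ m₁ x g 0 + N1fun μ m₁ x f 0 * 0 -
        (0 * N1fun μ m₁ x g 0 + Nfun μ m₁ x f 0 * (cmom μ 2 * deriv (deriv g) x))) 0 :=
    (hN1d0.mul hDd0).sub (hNd0.mul hD1d0)
  have hr'd := hnum.div (hDd0.pow 2)
    (show Nfun μ m₁ x g 0 ^ 2 ≠ 0 from by rw [hD0]; positivity)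
  -- C² neighbourhood for the local inverse
  obtain ⟨U, hUnhds, hLU⟩ := hLC2.contDiffOn (le_refl _) (by intro h; simp at h)
  obtain ⟨V, hVU, hVopen, hVmem⟩ := _root_.mem_nhds_iff.1 hUnhds
  have hLV : ContDiffOn ℝ 2 L V := hLU.mono hVU
  have hLd : ∀ w ∈ V, HasDerivAt L (deriv L w) w := fun w hw =>
    ((hLV.contDiffAt (hVopen.mem_nhds hw)).differentiableAt (by norm_num)).hasDerivAt
  have hL1C : ContDiffOn ℝ 1 (deriv L) V := hLV.deriv_of_isOpen (m := 1) hVopen (by norm_num)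
  have hL1d : HasDerivAt (deriv L) (deriv (deriv L) (φ x)) (φ x) :=
    ((hL1C.contDiffAt (hVopen.mem_nhds hVmem)).differentiableAt (by norm_num)).hasDerivAt
  -- continuity of the quotient at 0
  have hrt : Tendsto (fun v => Nfun μ m₁ x f v / Nfun μ m₁ x g v) (𝓝 0) (𝓝 (φ x)) := by
    have h := hr0d.continuousAt
    have h0 : (fun v => Nfun μ m₁ x f v / Nfun μ m₁ x g v) 0 = φ x := hr00
    rw [← h0]
    exact h
  have hVr : ∀ᶠ u in 𝓝 (0:ℝ), Nfun μ m₁ x f u / Nfun μ m₁ x g u ∈ V :=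
    hrt.eventually (hVopen.eventually_mem hVmem)
  -- mfun agrees with L ∘ quotient near 0
  have hmLr : (mfun I f g μ x) =ᶠ[𝓝 0]
      fun u => L (Nfun μ m₁ x f u / Nfun μ m₁ x g u) := by
    have h1 : ∀ᶠ u in 𝓝 (0:ℝ),
        Function.invFunOn φ I (Nfun μ m₁ x f u / Nfun μ m₁ x g u) =
          L (Nfun μ m₁ x f u / Nfun μ m₁ x g u) := hrt.eventually hinveq
    filter_upwards [h1] with u hu
    rw [hmr u, hu]
  have hiter : iteratedDeriv 2 (mfun I f g μ x) 0 =
      deriv (deriv (fun u => L (Nfun μ m₁ x f u / Nfun μ m₁ x g u))) 0 := by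
    rw [show (2:ℕ) = 1 + 1 from rfl, iteratedDeriv_succ, iteratedDeriv_one]
    exact (hmLr.deriv).deriv_eq
  have hchain : ∀ᶠ u in 𝓝 (0:ℝ),
      deriv (fun v => L (Nfun μ m₁ x f v / Nfun μ m₁ x g v)) u =
        deriv L (Nfun μ m₁ x f u / Nfun μ m₁ x g u) *
          ((N1fun μ m₁ x f u * Nfun μ m₁ x g u - Nfun μ m₁ x f u * N1fun μ m₁ x g u) /
            Nfun μ m₁ x g u ^ 2) := by
    filter_upwards [hrd, hVr] with u hu1 hu2
    exact ((hLd _ hu2).comp u hu1).deriv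
  have hstep2 : deriv (deriv (fun v => L (Nfun μ m₁ x f v / Nfun μ m₁ x g v))) 0 =
      deriv (fun u => deriv L (Nfun μ m₁ x f u / Nfun μ m₁ x g u) *
        ((N1fun μ m₁ x f u * Nfun μ m₁ x g u - Nfun μ m₁ x f u * N1fun μ m₁ x g u) /
          Nfun μ m₁ x g u ^ 2)) 0 :=
    Filter.EventuallyEq.deriv_eq hchain
  have hL1d' : HasDerivAt (deriv L) (deriv (deriv L) (φ x))
      (Nfun μ m₁ x f 0 / Nfun μ m₁ x g 0) := by
    rw [hr00]; exact hL1d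
  have hL1r := hL1d'.comp 0 hr0d
  have hprod := hL1r.mul hr'd
  simp only [Function.comp_apply, Function.comp_def, Pi.mul_def, Pi.div_def, Pi.pow_def] at hprod
  rw [hiter, hstep2, hprod.deriv]
  rw [hr00, (hLd1.hasDerivAt).deriv, hN0, hD0, hN10, hD10]
  simp only [Phi]
  rw [hWr2 x, hWr1 x, hcdef, inv_div]
  have hW : deriv f x * g x - f x * deriv g x ≠ 0 := hWne' x hx
  have hg0 : g x ≠ 0 := hgx.ne'
  field_simp
  ring

/-- Necessary condition from second derivatives when `μ₂ > 0`. -/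
theorem statement8 (I : Set ℝ) (hIopen : IsOpen I) (hIne : I.Nonempty)
    (hIconn : I.OrdConnected)
    (μ : Measure ℝ) [IsProbabilityMeasure μ] (hsupp : μ (Set.Icc (0:ℝ) 1)ᶜ = 0)
    (hμ2 : 0 < cmom μ 2)
    (f g F G : ℝ → ℝ) (hfg : ClassC 2 I f g) (hFG : ClassC 2 I F G)
    (hder : ∀ x ∈ I,
      iteratedDeriv 2 (mfun I f g μ x) 0 = iteratedDeriv 2 (mfun I F G μ x) 0) :
    ∀ x ∈ I, Phi f g x = Phi F G x := by
  intro x hx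
  have h1 := key_lemma I hIopen hIconn μ hsupp f g hfg hx
  have h2 := key_lemma I hIopen hIconn μ hsupp F G hFG hx
  have h3 := hder x hx
  rw [h1, h2] at h3
  exact mul_left_cancel₀ (ne_of_gt hμ2) h3
end

section
/- Let μ be a Borel probability measure on [0,1], let n be a positive integer, and let (f,g),(F,G) ∈ C_n(I). If M_{f,g;μ} equals M_{F,G;μ} near the diagonal of I², then for all k ∈ {1,…,n} and all x ∈ I, the kth derivatives at 0 coincide: m_{x;f,g;μ}^{(k)}(0) = m_{x;F,G;μ}^{(k)}(0). -/
open MeasureTheory Set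

set_option maxHeartbeats 1000000
set_option synthInstance.maxHeartbeats 400000


namespace Stmt9
open Filter Topology

noncomputable def pderivN : ℕ → (ℝ × ℝ → ℝ) → (ℝ × ℝ → ℝ)
  | 0, H => H
  | (k+1), H => fun p => deriv (fun u => pderivN k H (p.1, u)) p.2

lemma pderivN_succ_eq (k : ℕ) (H : ℝ × ℝ → ℝ) :
    pderivN (k+1) H = fun p => fderiv ℝ (fun u => pderivN k H (p.1, u)) p.2 1 := by
  funext p
  show deriv (fun u => pderivN k H (p.1, u)) p.2 = _
  rw [fderiv_apply_one_eq_deriv]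

lemma pderivN_contDiffAt {n : ℕ} {W : Set (ℝ×ℝ)} (hW : IsOpen W) {H : ℝ×ℝ → ℝ}
    (hH : ∀ p ∈ W, ContDiffAt ℝ n H p) :
    ∀ k, k ≤ n → ∀ p ∈ W, ContDiffAt ℝ ((n - k : ℕ)) (pderivN k H) p := by
  intro k
  induction k with
  | zero => intro _ p hp; simpa [pderivN] using hH p hp
  | succ k ih =>
    intro hk p hp
    have ihk := ih (Nat.le_of_succ_le hk)
    rw [pderivN_succ_eq]
    have hmain : ContDiffAt ℝ ((n - (k+1) : ℕ))
        (fun q : ℝ×ℝ => fderiv ℝ (fun u => pderivN k H (q.1, u)) q.2) p := by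
      apply ContDiffAt.fderiv (f := fun (q : ℝ×ℝ) (u : ℝ) => pderivN k H (q.1, u))
        (g := fun q : ℝ×ℝ => q.2) (n := ((n - k : ℕ) : WithTop ℕ∞))
      · have hcomp : ContDiffAt ℝ ((n - k : ℕ))
            ((pderivN k H) ∘ (fun q : (ℝ×ℝ)×ℝ => ((q.1.1, q.2) : ℝ×ℝ))) (p, p.2) := by
          apply ContDiffAt.comp
          · simpa using ihk p hp
          · exact ((contDiff_fst.fst.prodMk contDiff_snd)).contDiffAt
        exact hcomp
      · exact contDiffAt_snd
      · have h1 : (n - (k+1)) + 1 = n - k := by omega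
        rw [show ((n - (k+1) : ℕ) : WithTop ℕ∞) + 1 = ((n - k : ℕ) : WithTop ℕ∞) by
          exact_mod_cast congrArg (Nat.cast : ℕ → WithTop ℕ∞) h1]
    exact hmain.clm_apply contDiffAt_const

lemma pderivN_eq {W : Set (ℝ×ℝ)} (hW : IsOpen W) (H : ℝ×ℝ → ℝ) :
    ∀ k, ∀ p ∈ W, iteratedDeriv k (fun u => H (p.1, u)) p.2 = pderivN k H p := by
  intro k
  induction k with
  | zero => intro p hp; simp [pderivN]
  | succ k ih =>
    intro p hp
    rw [iteratedDeriv_succ]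
    show _ = deriv (fun u => pderivN k H (p.1, u)) p.2
    apply Filter.EventuallyEq.deriv_eq
    have hc : ContinuousAt (fun u => ((p.1, u) : ℝ×ℝ)) p.2 := by fun_prop
    have hsl : ∀ᶠ u in 𝓝 p.2, ((p.1, u) : ℝ×ℝ) ∈ W := by
      apply hc.eventually_mem
      rw [show ((p.1, p.2) : ℝ×ℝ) = p from rfl]
      exact hW.mem_nhds hp
    exact hsl.mono fun u hu => ih (p.1, u) hu

lemma iteratedDeriv_ev {h1 h2 : ℝ → ℝ} {a : ℝ} (h : h1 =ᶠ[𝓝 a] h2) (k : ℕ) :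
    iteratedDeriv k h1 =ᶠ[𝓝 a] iteratedDeriv k h2 := by
  induction k with
  | zero => simpa using h
  | succ k ih => simpa [iteratedDeriv_succ] using ih.deriv


def Omeg (I : Set ℝ) : Set (ℝ×ℝ) := {p | p.1 ∈ I ∧ p.1 + p.2 ∈ I}

lemma isOpen_Omeg {I : Set ℝ} (hIopen : IsOpen I) : IsOpen (Omeg I) :=
  (hIopen.preimage continuous_fst).inter (hIopen.preimage (continuous_fst.add continuous_snd))

lemma mem_I_of_seg {I : Set ℝ} (hIconn : I.OrdConnected) {p : ℝ×ℝ} (hp : p ∈ Omeg I)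
    {t : ℝ} (ht : t ∈ Icc (0:ℝ) 1) : p.1 + t * p.2 ∈ I := by
  have hseg : p.1 + t * p.2 ∈ segment ℝ p.1 (p.1 + p.2) :=
    ⟨1 - t, t, by linarith [ht.2], ht.1, by ring, by simp [smul_eq_mul]; ring⟩
  rw [segment_eq_uIcc] at hseg
  exact hIconn.uIcc_subset hp.1 hp.2 hseg


lemma exists_bound {I : Set ℝ} (hIopen : IsOpen I) (hIconn : I.OrdConnected)
    {f : ℝ → ℝ} (hf : ContinuousOn f I) {p₀ : ℝ×ℝ} (hp₀ : p₀ ∈ Omeg I) :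
    ∃ ε > 0, ∃ C : ℝ, Metric.closedBall p₀ ε ⊆ Omeg I ∧
      ∀ p ∈ Metric.closedBall p₀ ε, ∀ t ∈ Icc (0:ℝ) 1, |f (p.1 + t * p.2)| ≤ C := by
  obtain ⟨ε, hε, hball⟩ := Metric.nhds_basis_closedBall.mem_iff.1
    ((isOpen_Omeg hIopen).mem_nhds hp₀)
  have hK : IsCompact ((fun q : (ℝ×ℝ)×ℝ => q.1.1 + q.2 * q.1.2) ''
      ((Metric.closedBall p₀ ε) ×ˢ Icc (0:ℝ) 1)) :=
    ((isCompact_closedBall _ _).prod isCompact_Icc).image (by fun_prop)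
  have hKI : ((fun q : (ℝ×ℝ)×ℝ => q.1.1 + q.2 * q.1.2) ''
      ((Metric.closedBall p₀ ε) ×ˢ Icc (0:ℝ) 1)) ⊆ I := by
    rintro _ ⟨⟨p, t⟩, ⟨hp, ht⟩, rfl⟩
    exact mem_I_of_seg hIconn (hball hp) ht
  obtain ⟨C, hC⟩ := hK.exists_bound_of_continuousOn (hf.mono hKI)
  refine ⟨ε, hε, C, hball, fun p hp t ht => ?_⟩
  have := hC _ ⟨(p, t), ⟨hp, ht⟩, rfl⟩
  simpa [Real.norm_eq_abs] using this

lemma aesm_int {I : Set ℝ} (hIconn : I.OrdConnected)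
    {ν : Measure ℝ} (hae : ∀ᵐ t ∂ν, t ∈ Icc (0:ℝ) 1)
    {f w : ℝ → ℝ} (hf : ContinuousOn f I) (hw : Continuous w) {p : ℝ×ℝ} (hp : p ∈ Omeg I) :
    AEStronglyMeasurable (fun t => w t * f (p.1 + t * p.2)) ν := by
  have hmem : ∀ t : ℝ, min (max t 0) 1 ∈ Icc (0:ℝ) 1 :=
    fun t => ⟨le_min (le_max_right t 0) zero_le_one, min_le_right _ _⟩
  have hcont : Continuous (fun t => w t * f (p.1 + (min (max t 0) 1) * p.2)) := by
    apply hw.mul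
    apply hf.comp_continuous (by fun_prop)
    intro t; exact mem_I_of_seg hIconn hp (hmem t)
  apply hcont.aestronglyMeasurable.congr
  filter_upwards [hae] with t ht
  rw [max_eq_left ht.1, min_eq_left ht.2]

lemma integrable_int {I : Set ℝ} (hIopen : IsOpen I) (hIconn : I.OrdConnected)
    {ν : Measure ℝ} [IsFiniteMeasure ν] (hae : ∀ᵐ t ∂ν, t ∈ Icc (0:ℝ) 1)
    {f w : ℝ → ℝ} (hf : ContinuousOn f I) (hw : Continuous w) {p : ℝ×ℝ} (hp : p ∈ Omeg I) :
    Integrable (fun t => w t * f (p.1 + t * p.2)) ν := by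
  obtain ⟨ε, hε, C, hsub, hC⟩ := exists_bound hIopen hIconn hf hp
  obtain ⟨Cw, hCw⟩ := isCompact_Icc.exists_bound_of_continuousOn
    (hw.continuousOn : ContinuousOn w (Icc (0:ℝ) 1))
  have hCw0 : 0 ≤ Cw := le_trans (norm_nonneg _) (hCw 0 ⟨le_rfl, zero_le_one⟩)
  apply Integrable.mono' (integrable_const (Cw * C)) (aesm_int hIconn hae hf hw hp)
  filter_upwards [hae] with t ht
  rw [Real.norm_eq_abs, abs_mul]
  have h1 : |w t| ≤ Cw := by simpa [Real.norm_eq_abs] using hCw t ht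
  have h2 : |f (p.1 + t * p.2)| ≤ C := hC p (Metric.mem_closedBall_self hε.le) t ht
  exact mul_le_mul h1 h2 (abs_nonneg _) hCw0


lemma pint_contDiffOn {I : Set ℝ} (hIopen : IsOpen I) (hIconn : I.OrdConnected)
    (ν : Measure ℝ) [IsFiniteMeasure ν] (hae : ∀ᵐ t ∂ν, t ∈ Icc (0:ℝ) 1)
    (n : ℕ) :
    ∀ f w : ℝ → ℝ, ContDiffOn ℝ n f I → Continuous w →
      ContDiffOn ℝ n (fun p : ℝ × ℝ => ∫ t, w t * f (p.1 + t * p.2) ∂ν) (Omeg I) := by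
  induction n with
  | zero =>
    intro f w hf hw
    have hfc : ContinuousOn f I := by
      have : ContDiffOn ℝ 0 f I := by exact_mod_cast hf
      exact this.continuousOn
    rw [show ((0:ℕ) : WithTop ℕ∞) = 0 by norm_cast, contDiffOn_zero]
    intro p₀ hp₀
    apply ContinuousAt.continuousWithinAt
    obtain ⟨ε, hε, C, hsub, hC⟩ := exists_bound hIopen hIconn hfc hp₀
    obtain ⟨Cw, hCw⟩ := isCompact_Icc.exists_bound_of_continuousOn
      (hw.continuousOn : ContinuousOn w (Icc (0:ℝ) 1))
    have hCw0 : 0 ≤ Cw := le_trans (norm_nonneg _) (hCw 0 ⟨le_rfl, zero_le_one⟩)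
    have hball : Metric.closedBall p₀ ε ∈ 𝓝 p₀ := Metric.closedBall_mem_nhds p₀ hε
    apply continuousAt_of_dominated (bound := fun _ => Cw * C)
    · filter_upwards [hball] with p hp
      exact aesm_int hIconn hae hfc hw (hsub hp)
    · filter_upwards [hball] with p hp
      filter_upwards [hae] with t ht
      rw [Real.norm_eq_abs, abs_mul]
      exact mul_le_mul (by simpa [Real.norm_eq_abs] using hCw t ht) (hC p hp t ht)
        (abs_nonneg _) hCw0
    · exact integrable_const _
    · filter_upwards [hae] with t ht
      have hz : p₀.1 + t * p₀.2 ∈ I := mem_I_of_seg hIconn hp₀ ht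
      have hfz : ContinuousAt f (p₀.1 + t * p₀.2) := hfc.continuousAt (hIopen.mem_nhds hz)
      have hin : ContinuousAt (fun p : ℝ×ℝ => p.1 + t * p.2) p₀ := by fun_prop
      exact continuousAt_const.mul
        (ContinuousAt.comp (g := f) (f := fun p : ℝ×ℝ => p.1 + t * p.2) hfz hin)
  | succ n ih =>
    intro f w hf hw
    have h1n : ((n+1 : ℕ) : WithTop ℕ∞) ≠ 0 := by exact_mod_cast Nat.succ_ne_zero n
    have hf' : ContDiffOn ℝ n (deriv f) I :=
      hf.deriv_of_isOpen hIopen (by exact_mod_cast le_rfl)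
    have hf'c : ContinuousOn (deriv f) I := by
      have : ContDiffOn ℝ 0 (deriv f) I := hf'.of_le (by exact_mod_cast Nat.zero_le n)
      exact this.continuousOn
    have hdiff : ∀ z ∈ I, HasDerivAt f (deriv f z) z := fun z hz =>
      ((hf.differentiableOn h1n).differentiableAt (hIopen.mem_nhds hz)).hasDerivAt
    set A : ℝ → (ℝ×ℝ →L[ℝ] ℝ) := fun t =>
      ContinuousLinearMap.fst ℝ ℝ ℝ + t • ContinuousLinearMap.snd ℝ ℝ ℝ with hAdef
    have hAapp : ∀ t : ℝ, ∀ q : ℝ×ℝ, A t q = q.1 + t * q.2 := by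
      intro t q
      simp [hAdef, ContinuousLinearMap.add_apply, ContinuousLinearMap.smul_apply,
        smul_eq_mul]
    have hAnorm : ∀ t ∈ Icc (0:ℝ) 1, ‖A t‖ ≤ 2 := by
      intro t ht
      apply ContinuousLinearMap.opNorm_le_bound _ (by norm_num)
      intro q
      rw [hAapp t q]
      calc ‖q.1 + t * q.2‖ ≤ ‖q.1‖ + ‖t * q.2‖ := norm_add_le _ _
        _ ≤ ‖q‖ + ‖q‖ := by
            refine add_le_add (norm_fst_le q) ?_
            rw [norm_mul]
            calc ‖t‖ * ‖q.2‖ ≤ 1 * ‖q‖ := by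
                  apply mul_le_mul _ (norm_snd_le q) (norm_nonneg _) zero_le_one
                  rw [Real.norm_eq_abs, abs_le]; constructor <;> linarith [ht.1, ht.2]
              _ = ‖q‖ := one_mul _
        _ = 2 * ‖q‖ := by ring
    -- key derivative fact
    have key : ∀ p₀ ∈ Omeg I, HasFDerivAt (fun p : ℝ×ℝ => ∫ t, w t * f (p.1 + t * p.2) ∂ν)
        ((∫ t, w t * deriv f (p₀.1 + t * p₀.2) ∂ν) • (ContinuousLinearMap.fst ℝ ℝ ℝ)
          + (∫ t, (t * w t) * deriv f (p₀.1 + t * p₀.2) ∂ν) • (ContinuousLinearMap.snd ℝ ℝ ℝ)) p₀ := by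
      intro p₀ hp₀
      obtain ⟨ε, hε, C, hsub, hC⟩ := exists_bound hIopen hIconn hf'c hp₀
      obtain ⟨Cw, hCw⟩ := isCompact_Icc.exists_bound_of_continuousOn
        (hw.continuousOn : ContinuousOn w (Icc (0:ℝ) 1))
      have hCw0 : 0 ≤ Cw := le_trans (norm_nonneg _) (hCw 0 ⟨le_rfl, zero_le_one⟩)
      have hfc : ContinuousOn f I := hf.continuousOn
      have hC0 : 0 ≤ C :=
        le_trans (abs_nonneg _) (hC p₀ (Metric.mem_closedBall_self hε.le) 0 ⟨le_rfl, zero_le_one⟩)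
      have hmain := hasFDerivAt_integral_of_dominated_of_fderiv_le
        (F := fun (p : ℝ×ℝ) (t : ℝ) => w t * f (p.1 + t * p.2))
        (F' := fun (p : ℝ×ℝ) (t : ℝ) => (w t * deriv f (p.1 + t * p.2)) • A t)
        (bound := fun _ => Cw * C * 2) (μ := ν) (x₀ := p₀) (Metric.ball_mem_nhds p₀ hε)
        ?_ ?_ ?_ ?_ ?_ ?_
      · -- rewrite the integral of F'
        refine hmain.congr_fderiv ?_
        symm
        have hint1 : Integrable (fun t => (w t * deriv f (p₀.1 + t * p₀.2)) • ContinuousLinearMap.fst ℝ ℝ ℝ) ν :=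
          (integrable_int hIopen hIconn hae hf'c hw hp₀).smul_const _
        have hint2 : Integrable (fun t => ((w t * deriv f (p₀.1 + t * p₀.2)) * t) • ContinuousLinearMap.snd ℝ ℝ ℝ) ν := by
          apply Integrable.smul_const
          have : Integrable (fun t => (fun s => s * w s) t * deriv f (p₀.1 + t * p₀.2)) ν :=
            integrable_int hIopen hIconn hae hf'c (by fun_prop) hp₀
          apply this.congr
          filter_upwards with t; ring
        have hsplit : (fun t => (w t * deriv f (p₀.1 + t * p₀.2)) • A t)
            = fun t => (w t * deriv f (p₀.1 + t * p₀.2)) • ContinuousLinearMap.fst ℝ ℝ ℝ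
              + ((w t * deriv f (p₀.1 + t * p₀.2)) * t) • ContinuousLinearMap.snd ℝ ℝ ℝ := by
          funext t
          rw [hAdef]
          simp only [smul_add, smul_smul]
        rw [hsplit, integral_add hint1 hint2, integral_smul_const, integral_smul_const]
        congr 2
        apply integral_congr_ae
        filter_upwards with t; ring
      · filter_upwards [Metric.closedBall_mem_nhds p₀ hε] with p hp
        exact aesm_int hIconn hae hfc hw (hsub hp)
      · exact integrable_int hIopen hIconn hae hfc hw hp₀
      · apply AEStronglyMeasurable.smul (f := fun t => w t * deriv f (p₀.1 + t * p₀.2)) (g := A)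
        · exact aesm_int hIconn hae hf'c hw hp₀
        · exact (Continuous.aestronglyMeasurable (by fun_prop : Continuous A))
      · filter_upwards [hae] with t ht
        intro p hp
        have hpball : p ∈ Metric.closedBall p₀ ε := Metric.ball_subset_closedBall hp
        apply ContinuousLinearMap.opNorm_le_bound _
          (mul_nonneg (mul_nonneg hCw0 hC0) (by norm_num))
        intro q
        rw [ContinuousLinearMap.smul_apply, norm_smul]
        have hb1 : ‖w t * deriv f (p.1 + t * p.2)‖ ≤ Cw * C := by
          rw [Real.norm_eq_abs, abs_mul]
          exact mul_le_mul (by simpa [Real.norm_eq_abs] using hCw t ht)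
            (hC p hpball t ht) (abs_nonneg _) hCw0
        have hb2 : ‖(A t) q‖ ≤ 2 * ‖q‖ :=
          le_trans ((A t).le_opNorm q) (mul_le_mul_of_nonneg_right (hAnorm t ht) (norm_nonneg _))
        calc ‖w t * deriv f (p.1 + t * p.2)‖ * ‖(A t) q‖ ≤ (Cw * C) * (2 * ‖q‖) :=
              mul_le_mul hb1 hb2 (norm_nonneg _) (mul_nonneg hCw0 hC0)
          _ = Cw * C * 2 * ‖q‖ := by ring
      · exact integrable_const _
      · filter_upwards [hae] with t ht
        intro p hp
        have hpΩ : p ∈ Omeg I := hsub (Metric.ball_subset_closedBall hp)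
        have hz : p.1 + t * p.2 ∈ I := mem_I_of_seg hIconn hpΩ ht
        have h1 : HasFDerivAt (fun q : ℝ×ℝ => q.1 + t * q.2) (A t) p := by
          have := (A t).hasFDerivAt (x := p)
          apply this.congr_of_eventuallyEq
          filter_upwards with q
          rw [hAapp]
        have h2 := (hdiff _ hz).comp_hasFDerivAt p h1
        have h3 := h2.const_mul (w t)
        have : (w t) • ((deriv f (p.1 + t * p.2)) • A t)
            = (w t * deriv f (p.1 + t * p.2)) • A t := by rw [smul_smul]
        rw [this] at h3
        exact h3
    -- assemble
    rw [show ((n+1 : ℕ) : WithTop ℕ∞) = (n : WithTop ℕ∞) + 1 by norm_cast]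
    rw [contDiffOn_succ_iff_fderiv_of_isOpen (isOpen_Omeg hIopen)]
    refine ⟨fun p hp => (key p hp).differentiableAt.differentiableWithinAt,
      fun h => absurd h (by exact_mod_cast WithTop.natCast_ne_top n), ?_⟩
    have hC1 := ih (deriv f) w hf' hw
    have hC2 := ih (deriv f) (fun t => t * w t) hf' (by fun_prop)
    apply ContDiffOn.congr ((hC1.smul contDiffOn_const).add (hC2.smul contDiffOn_const))
    intro p hp
    exact (key p hp).fderiv

lemma integrable_int' {I : Set ℝ} (hIopen : IsOpen I) (hIconn : I.OrdConnected)
    {ν : Measure ℝ} [IsFiniteMeasure ν] (hae : ∀ᵐ t ∂ν, t ∈ Icc (0:ℝ) 1)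
    {f : ℝ → ℝ} (hf : ContinuousOn f I) {p : ℝ×ℝ} (hp : p ∈ Omeg I) :
    Integrable (fun t => f (p.1 + t * p.2)) ν := by
  have := integrable_int hIopen hIconn hae hf continuous_const (p := p) hp (w := fun _ => (1:ℝ))
  simpa [one_mul] using this

lemma pint_pos {I : Set ℝ} (hIopen : IsOpen I) (hIconn : I.OrdConnected)
    {ν : Measure ℝ} [IsProbabilityMeasure ν] (hae : ∀ᵐ t ∂ν, t ∈ Icc (0:ℝ) 1)
    {g : ℝ → ℝ} (hg : ContinuousOn g I) (hgpos : ∀ x ∈ I, 0 < g x)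
    {p : ℝ×ℝ} (hp : p ∈ Omeg I) : 0 < ∫ t, g (p.1 + t * p.2) ∂ν := by
  have hK : IsCompact ((fun t => p.1 + t * p.2) '' Icc (0:ℝ) 1) :=
    isCompact_Icc.image (by fun_prop)
  have hKI : ((fun t => p.1 + t * p.2) '' Icc (0:ℝ) 1) ⊆ I := by
    rintro _ ⟨t, ht, rfl⟩; exact mem_I_of_seg hIconn hp ht
  have hKne : ((fun t => p.1 + t * p.2) '' Icc (0:ℝ) 1).Nonempty :=
    (nonempty_Icc.2 zero_le_one).image _
  obtain ⟨z, hzK, hzmin⟩ := hK.exists_isMinOn hKne (hg.mono hKI)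
  have hm : 0 < g z := hgpos z (hKI hzK)
  have hle : ∫ t, g z ∂ν ≤ ∫ t, g (p.1 + t * p.2) ∂ν := by
    apply integral_mono_ae (integrable_const _) (integrable_int' hIopen hIconn hae hg hp)
    filter_upwards [hae] with t ht
    exact hzmin ⟨t, ht, rfl⟩
  have : ∫ (_ : ℝ), g z ∂ν = g z := by simp
  linarith [this ▸ hle]

lemma pint_mem_range {I : Set ℝ} (hIopen : IsOpen I) (hIconn : I.OrdConnected)
    {ν : Measure ℝ} [IsProbabilityMeasure ν] (hae : ∀ᵐ t ∂ν, t ∈ Icc (0:ℝ) 1)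
    {f g : ℝ → ℝ} (hf : ContinuousOn f I) (hg : ContinuousOn g I) (hgpos : ∀ x ∈ I, 0 < g x)
    {p : ℝ×ℝ} (hp : p ∈ Omeg I) :
    ∃ ζ ∈ I, f ζ / g ζ =
      (∫ t, f (p.1 + t * p.2) ∂ν) / (∫ t, g (p.1 + t * p.2) ∂ν) := by
  set φ : ℝ → ℝ := fun x => f x / g x with hφ
  set J := uIcc p.1 (p.1 + p.2) with hJ
  have hJI : J ⊆ I := hIconn.uIcc_subset hp.1 hp.2
  have hzJ : ∀ t ∈ Icc (0:ℝ) 1, p.1 + t * p.2 ∈ J := by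
    intro t ht
    have hseg : p.1 + t * p.2 ∈ segment ℝ p.1 (p.1 + p.2) :=
      ⟨1 - t, t, by linarith [ht.2], ht.1, by ring, by simp [smul_eq_mul]; ring⟩
    rwa [segment_eq_uIcc] at hseg
  have hφJ : ContinuousOn φ J := by
    apply ContinuousOn.div (hf.mono hJI) (hg.mono hJI)
    intro x hx; exact ne_of_gt (hgpos x (hJI hx))
  have hJc : IsCompact J := isCompact_uIcc
  have hJne : J.Nonempty := nonempty_uIcc
  obtain ⟨ζ₁, hζ₁J, hmin⟩ := hJc.exists_isMinOn hJne hφJ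
  obtain ⟨ζ₂, hζ₂J, hmax⟩ := hJc.exists_isMaxOn hJne hφJ
  set I₁ := ∫ t, f (p.1 + t * p.2) ∂ν with hI₁
  set I₂ := ∫ t, g (p.1 + t * p.2) ∂ν with hI₂
  have hI₂pos : 0 < I₂ := pint_pos hIopen hIconn hae hg hgpos hp
  have hgz : ∀ t ∈ Icc (0:ℝ) 1, 0 < g (p.1 + t * p.2) :=
    fun t ht => hgpos _ (hJI (hzJ t ht))
  have hlow : φ ζ₁ * I₂ ≤ I₁ := by
    rw [show φ ζ₁ * I₂ = ∫ t, φ ζ₁ * g (p.1 + t * p.2) ∂ν by rw [integral_const_mul]]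
    apply integral_mono_ae
    · exact (integrable_int' hIopen hIconn hae hg hp).const_mul _
    · exact integrable_int' hIopen hIconn hae hf hp
    · filter_upwards [hae] with t ht
      have h1 : φ ζ₁ ≤ φ (p.1 + t * p.2) := hmin (hzJ t ht)
      have h2 := hgz t ht
      rw [hφ] at h1
      calc φ ζ₁ * g (p.1 + t * p.2)
          ≤ (f (p.1 + t * p.2) / g (p.1 + t * p.2)) * g (p.1 + t * p.2) :=
            mul_le_mul_of_nonneg_right h1 h2.le
        _ = f (p.1 + t * p.2) := by field_simp
  have hhigh : I₁ ≤ φ ζ₂ * I₂ := by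
    rw [show φ ζ₂ * I₂ = ∫ t, φ ζ₂ * g (p.1 + t * p.2) ∂ν by rw [integral_const_mul]]
    apply integral_mono_ae
    · exact integrable_int' hIopen hIconn hae hf hp
    · exact (integrable_int' hIopen hIconn hae hg hp).const_mul _
    · filter_upwards [hae] with t ht
      have h1 : φ (p.1 + t * p.2) ≤ φ ζ₂ := hmax (hzJ t ht)
      have h2 := hgz t ht
      calc f (p.1 + t * p.2)
          = (f (p.1 + t * p.2) / g (p.1 + t * p.2)) * g (p.1 + t * p.2) := by field_simp
        _ ≤ φ ζ₂ * g (p.1 + t * p.2) := mul_le_mul_of_nonneg_right h1 h2.le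
  have hmem : I₁ / I₂ ∈ Icc (φ ζ₁) (φ ζ₂) :=
    ⟨(le_div_iff₀ hI₂pos).2 hlow, (div_le_iff₀ hI₂pos).2 hhigh⟩
  have hsub2 : uIcc ζ₁ ζ₂ ⊆ J := uIcc_subset_uIcc hζ₁J hζ₂J
  have hivt := intermediate_value_uIcc (hφJ.mono hsub2)
  have : I₁ / I₂ ∈ φ '' uIcc ζ₁ ζ₂ := hivt (Icc_subset_uIcc hmem)
  obtain ⟨ζ, hζ, hval⟩ := this
  exact ⟨ζ, hJI (hsub2 hζ), hval⟩

lemma inv_contDiffAt {I : Set ℝ} (hIopen : IsOpen I) (hIconn : I.OrdConnected)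
    {n : ℕ} (hn : 1 ≤ n) {f g : ℝ → ℝ}
    (hf : ContDiffOn ℝ n f I) (hg : ContDiffOn ℝ n g I)
    (hgpos : ∀ x ∈ I, 0 < g x)
    (hWr : ∀ x ∈ I, deriv f x * g x - f x * deriv g x ≠ 0) :
    ∀ c ∈ I, ContDiffAt ℝ n (Function.invFunOn (fun x => f x / g x) I) (f c / g c) := by
  set φ : ℝ → ℝ := fun x => f x / g x with hφdef
  have h1n : ((n : ℕ) : WithTop ℕ∞) ≠ 0 := by exact_mod_cast (by omega : n ≠ 0)
  set φ' : ℝ → ℝ := fun x => (deriv f x * g x - f x * deriv g x) / (g x)^2 with hφ'def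
  have hd : ∀ x ∈ I, HasDerivAt φ (φ' x) x := by
    intro x hx
    have hfd : HasDerivAt f (deriv f x) x :=
      ((hf.differentiableOn h1n).differentiableAt (hIopen.mem_nhds hx)).hasDerivAt
    have hgd : HasDerivAt g (deriv g x) x :=
      ((hg.differentiableOn h1n).differentiableAt (hIopen.mem_nhds hx)).hasDerivAt
    exact hfd.div hgd (ne_of_gt (hgpos x hx))
  have hd0 : ∀ x ∈ I, φ' x ≠ 0 := by
    intro x hx
    apply div_ne_zero (hWr x hx)
    exact pow_ne_zero _ (ne_of_gt (hgpos x hx))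
  have hφc : ∀ x ∈ I, ContDiffAt ℝ n φ x := by
    intro x hx
    exact ((hf.contDiffAt (hIopen.mem_nhds hx)).div (hg.contDiffAt (hIopen.mem_nhds hx))
      (ne_of_gt (hgpos x hx)))
  have hinj : InjOn φ I := by
    intro a ha b hb hab
    by_contra hne
    wlog hlt : a < b generalizing a b
    · exact this hb ha hab.symm (Ne.symm hne) (lt_of_le_of_ne (not_lt.1 hlt) (Ne.symm hne))
    have hIcc : Icc a b ⊆ I := hIconn.out ha hb
    obtain ⟨c, hc, hc'⟩ := exists_hasDerivAt_eq_slope φ φ' hlt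
      (fun x hx => ((hφc x (hIcc hx)).continuousAt).continuousWithinAt)
      (fun x hx => hd x (hIcc ⟨hx.1.le, hx.2.le⟩))
    rw [hab] at hc'
    simp only [sub_self, zero_div] at hc'
    exact hd0 c (hIcc ⟨hc.1.le, hc.2.le⟩) hc'
  intro c hc
  have hφat := hφc c hc
  have hne := hd0 c hc
  have hF : HasFDerivAt φ
      ((ContinuousLinearEquiv.unitsEquivAut ℝ (Units.mk0 (φ' c) hne)) : ℝ →L[ℝ] ℝ) c :=
    (hd c hc).hasFDerivAt_equiv hne
  have hsmooth := hφat.to_localInverse (f' := ContinuousLinearEquiv.unitsEquivAut ℝ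
    (Units.mk0 (φ' c) hne)) hF h1n
  have hstrict := hφat.hasStrictFDerivAt' hF h1n
  have hri : ∀ᶠ y in 𝓝 (φ c), φ (hφat.localInverse hF h1n y) = y :=
    hstrict.eventually_right_inverse
  have hcontinv : ContinuousAt (hφat.localInverse hF h1n) (φ c) := hsmooth.continuousAt
  have hmemI : ∀ᶠ y in 𝓝 (φ c), (hφat.localInverse hF h1n) y ∈ I := by
    apply hcontinv.eventually_mem
    rw [hφat.localInverse_apply_image hF h1n]
    exact hIopen.mem_nhds hc
  have hev : ∀ᶠ y in 𝓝 (φ c), Function.invFunOn φ I y = (hφat.localInverse hF h1n) y := by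
    filter_upwards [hri, hmemI] with y h1 h2
    conv_lhs => rw [← h1]
    exact hinj.leftInvOn_invFunOn h2
  have : ContDiffAt ℝ n (Function.invFunOn φ I) (φ c) :=
    hsmooth.congr_of_eventuallyEq hev
  exact this

lemma mmean_contDiffAt {I : Set ℝ} (hIopen : IsOpen I) (hIconn : I.OrdConnected)
    {n : ℕ} (hn : 1 ≤ n)
    (μ : Measure ℝ) [IsProbabilityMeasure μ] (hsupp : μ (Set.Icc (0:ℝ) 1)ᶜ = 0)
    {f g : ℝ → ℝ} (hfg : ClassC n I f g) :
    ∀ q : ℝ×ℝ, q ∈ I ×ˢ I → ContDiffAt ℝ n (fun q : ℝ×ℝ => Mmean I f g μ q.1 q.2) q := by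
  obtain ⟨hf, hg, hgpos, hWr0⟩ := hfg
  have hIcc1 : μ (Icc (0:ℝ) 1) = 1 := by
    have h1 := measure_add_measure_compl (μ := μ) (s := Icc (0:ℝ) 1) measurableSet_Icc
    rw [hsupp, add_zero, measure_univ] at h1
    exact h1
  haveI hprob : IsProbabilityMeasure (μ.restrict (Icc (0:ℝ) 1)) := by
    constructor
    rw [Measure.restrict_apply_univ]
    exact hIcc1
  have hae : ∀ᵐ t ∂(μ.restrict (Icc (0:ℝ) 1)), t ∈ Icc (0:ℝ) 1 :=
    ae_restrict_mem measurableSet_Icc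
  have hWr : ∀ x ∈ I, deriv f x * g x - f x * deriv g x ≠ 0 := by
    intro x hx
    have := hWr0 x hx
    simpa [Wr, iteratedDeriv_one, iteratedDeriv_zero] using this
  set ν := μ.restrict (Icc (0:ℝ) 1) with hν
  set Nf : ℝ×ℝ → ℝ := fun p => ∫ t, f (p.1 + t * p.2) ∂ν with hNf
  set Ng : ℝ×ℝ → ℝ := fun p => ∫ t, g (p.1 + t * p.2) ∂ν with hNg
  set σ : ℝ×ℝ → ℝ×ℝ := fun q => (q.2, q.1 - q.2) with hσ
  have heqfun : (fun q : ℝ×ℝ => Mmean I f g μ q.1 q.2)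
      = fun q => Function.invFunOn (fun t => f t / g t) I (Nf (σ q) / Ng (σ q)) := by
    funext q
    unfold Mmean
    congr 1
    have e1 : Nf (σ q) = ∫ t in Icc (0:ℝ) 1, f (t * q.1 + (1 - t) * q.2) ∂μ := by
      simp only [hNf, hσ]
      apply integral_congr_ae
      filter_upwards with t
      exact congrArg f (by ring)
    have e2 : Ng (σ q) = ∫ t in Icc (0:ℝ) 1, g (t * q.1 + (1 - t) * q.2) ∂μ := by
      simp only [hNg, hσ]
      apply integral_congr_ae
      filter_upwards with t
      exact congrArg g (by ring)
    rw [e1, e2]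
  intro q hq
  rw [heqfun]
  have hσq : σ q ∈ Omeg I := by
    constructor
    · exact hq.2
    · show q.2 + (q.1 - q.2) ∈ I
      rw [show q.2 + (q.1 - q.2) = q.1 by ring]
      exact hq.1
  have hNfC : ContDiffOn ℝ n Nf (Omeg I) := by
    have := pint_contDiffOn hIopen hIconn ν hae n f (fun _ => (1:ℝ)) hf continuous_const
    simpa [one_mul] using this
  have hNgC : ContDiffOn ℝ n Ng (Omeg I) := by
    have := pint_contDiffOn hIopen hIconn ν hae n g (fun _ => (1:ℝ)) hg continuous_const
    simpa [one_mul] using this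
  have hσC : ContDiffAt ℝ n σ q := (contDiff_snd.prodMk (contDiff_fst.sub contDiff_snd)).contDiffAt
  have h1 : ContDiffAt ℝ n (Nf ∘ σ) q :=
    (hNfC.contDiffAt ((isOpen_Omeg hIopen).mem_nhds hσq)).comp q hσC
  have h2 : ContDiffAt ℝ n (Ng ∘ σ) q :=
    (hNgC.contDiffAt ((isOpen_Omeg hIopen).mem_nhds hσq)).comp q hσC
  have hratio : ContDiffAt ℝ n (fun q => Nf (σ q) / Ng (σ q)) q :=
    h1.div h2 (ne_of_gt (pint_pos hIopen hIconn hae hg.continuousOn hgpos hσq))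
  obtain ⟨ζ, hζI, hζval⟩ :=
    pint_mem_range hIopen hIconn hae hf.continuousOn hg.continuousOn hgpos hσq
  have hinv := inv_contDiffAt hIopen hIconn hn hf hg hgpos hWr ζ hζI
  rw [hζval] at hinv
  exact ContDiffAt.comp q hinv hratio

end Stmt9

open Stmt9 Filter Topology in
/-- Equality near the diagonal implies equality of derivatives of `m_x` at `0`. -/
theorem statement9 (I : Set ℝ) (hIopen : IsOpen I) (hIne : I.Nonempty)
    (hIconn : I.OrdConnected)
    (μ : Measure ℝ) [IsProbabilityMeasure μ] (hsupp : μ (Set.Icc (0:ℝ) 1)ᶜ = 0)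
    (n : ℕ) (hn : 1 ≤ n)
    (f g F G : ℝ → ℝ) (hfg : ClassC n I f g) (hFG : ClassC n I F G)
    (heq : EqualNearDiag I (Mmean I f g μ) (Mmean I F G μ)) :
    ∀ k, 1 ≤ k → k ≤ n → ∀ x ∈ I,
      iteratedDeriv k (mfun I f g μ x) 0 = iteratedDeriv k (mfun I F G μ x) 0 := by
  obtain ⟨U, hUopen, hUsub, hUdense, hUeq⟩ := heq
  intro k hk1 hkn x hx
  set m := mom1 μ with hm
  have hAC : ContDiff ℝ n (fun p : ℝ×ℝ => ((p.1 + (1-m)*p.2, p.1 - m*p.2) : ℝ×ℝ)) :=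
    (contDiff_fst.add (contDiff_const.mul contDiff_snd)).prodMk
      (contDiff_fst.sub (contDiff_const.mul contDiff_snd))
  set W : Set (ℝ×ℝ) :=
    (fun p : ℝ×ℝ => ((p.1 + (1-m)*p.2, p.1 - m*p.2) : ℝ×ℝ)) ⁻¹' (I ×ˢ I) with hW
  have hWopen : IsOpen W := (hIopen.prod hIopen).preimage hAC.continuous
  have hWmem : ∀ y ∈ I, ((y, (0:ℝ)) : ℝ×ℝ) ∈ W := by
    intro y hy
    simp only [hW, Set.mem_preimage, Set.mem_prod]
    constructor <;> · simp only [mul_zero, add_zero, sub_zero]; exact hy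
  set H₁ : ℝ×ℝ → ℝ := fun p => Mmean I f g μ (p.1 + (1-m)*p.2) (p.1 - m*p.2) with hH₁def
  set H₂ : ℝ×ℝ → ℝ := fun p => Mmean I F G μ (p.1 + (1-m)*p.2) (p.1 - m*p.2) with hH₂def
  have hm₁ : ∀ y : ℝ, mfun I f g μ y = fun u => H₁ (y, u) := fun y => rfl
  have hm₂ : ∀ y : ℝ, mfun I F G μ y = fun u => H₂ (y, u) := fun y => rfl
  have hH₁C : ∀ p ∈ W, ContDiffAt ℝ n H₁ p := by
    intro p hp
    exact ContDiffAt.comp (g := fun q : ℝ×ℝ => Mmean I f g μ q.1 q.2)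
      (f := fun p : ℝ×ℝ => ((p.1 + (1-m)*p.2, p.1 - m*p.2) : ℝ×ℝ)) p
      (mmean_contDiffAt hIopen hIconn hn μ hsupp hfg _ hp) hAC.contDiffAt
  have hH₂C : ∀ p ∈ W, ContDiffAt ℝ n H₂ p := by
    intro p hp
    exact ContDiffAt.comp (g := fun q : ℝ×ℝ => Mmean I F G μ q.1 q.2)
      (f := fun p : ℝ×ℝ => ((p.1 + (1-m)*p.2, p.1 - m*p.2) : ℝ×ℝ)) p
      (mmean_contDiffAt hIopen hIconn hn μ hsupp hFG _ hp) hAC.contDiffAt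
  have hiter₁ : ∀ y ∈ I, iteratedDeriv k (mfun I f g μ y) 0 = pderivN k H₁ (y,0) := by
    intro y hy
    rw [hm₁ y]
    exact pderivN_eq hWopen H₁ k (y,0) (hWmem y hy)
  have hiter₂ : ∀ y ∈ I, iteratedDeriv k (mfun I F G μ y) 0 = pderivN k H₂ (y,0) := by
    intro y hy
    rw [hm₂ y]
    exact pderivN_eq hWopen H₂ k (y,0) (hWmem y hy)
  have hcont₁ : ContinuousAt (fun y => pderivN k H₁ (y,0)) x := by
    exact ContinuousAt.comp (g := pderivN k H₁) (f := fun y : ℝ => ((y,(0:ℝ)) : ℝ×ℝ))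
      ((pderivN_contDiffAt hWopen hH₁C k hkn (x,0) (hWmem x hx)).continuousAt)
      (Continuous.continuousAt (by fun_prop))
  have hcont₂ : ContinuousAt (fun y => pderivN k H₂ (y,0)) x := by
    exact ContinuousAt.comp (g := pderivN k H₂) (f := fun y : ℝ => ((y,(0:ℝ)) : ℝ×ℝ))
      ((pderivN_contDiffAt hWopen hH₂C k hkn (x,0) (hWmem x hx)).continuousAt)
      (Continuous.continuousAt (by fun_prop))
  set S := {y | y ∈ I ∧ (y, y) ∈ U} with hS
  have hSeq : ∀ y ∈ S, pderivN k H₁ (y,0) = pderivN k H₂ (y,0) := by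
    intro y hy
    have hc : ContinuousAt (fun u : ℝ => ((y + (1-m)*u, y - m*u) : ℝ×ℝ)) 0 := by fun_prop
    have hval : ((y + (1-m)*(0:ℝ), y - m*(0:ℝ)) : ℝ×ℝ) = (y, y) := by
      simp only [mul_zero, add_zero, sub_zero]
    have hU : ∀ᶠ u in 𝓝 (0:ℝ), ((y + (1-m)*u, y - m*u) : ℝ×ℝ) ∈ U := by
      apply hc.eventually_mem
      rw [hval]
      exact hUopen.mem_nhds hy.2
    have hev : (fun u => H₁ (y,u)) =ᶠ[𝓝 (0:ℝ)] (fun u => H₂ (y,u)) := by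
      filter_upwards [hU] with u hu
      exact hUeq _ hu
    calc pderivN k H₁ (y,0) = iteratedDeriv k (fun u => H₁ (y,u)) 0 :=
          (pderivN_eq hWopen H₁ k (y,0) (hWmem y hy.1)).symm
      _ = iteratedDeriv k (fun u => H₂ (y,u)) 0 := (iteratedDeriv_ev hev k).self_of_nhds
      _ = pderivN k H₂ (y,0) := pderivN_eq hWopen H₂ k (y,0) (hWmem y hy.1)
  have hxcl : x ∈ closure S := hUdense hx
  haveI hne : (𝓝[S] x).NeBot := mem_closure_iff_nhdsWithin_neBot.mp hxcl
  have t₁ : Tendsto (fun y => pderivN k H₁ (y,0)) (𝓝[S] x) (𝓝 (pderivN k H₁ (x,0))) :=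
    hcont₁.tendsto.mono_left nhdsWithin_le_nhds
  have t₂ : Tendsto (fun y => pderivN k H₁ (y,0)) (𝓝[S] x) (𝓝 (pderivN k H₂ (x,0))) := by
    apply Tendsto.congr' _ (hcont₂.tendsto.mono_left nhdsWithin_le_nhds)
    exact eventually_nhdsWithin_of_forall (fun y hy => (hSeq y hy).symm)
  rw [hiter₁ x hx, hiter₂ x hx]
  exact tendsto_nhds_unique t₁ t₂
end

section
/- Let n be a positive integer, let (f,g) ∈ C_n(I), and let μ be a Borel probability measure on [0,1]. Then for every fixed x ∈ I, the function m_x := m_{x;f,g;μ} is n-times continuously differentiable in a neighborhood of 0, m_x(0) = x, and the following identity holds: Σ_{i=0}^{n} binom(n,i) μ_i · [ f^{(i)}(x)·(g∘m_x)^{(n−i)}(0) − g^{(i)}(x)·(f∘m_x)^{(n−i)}(0) ] = 0. -/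
open MeasureTheory Set

open Topology Filter

section AuxSect

private lemma contDiffAt_open (n : ℕ) {f : ℝ → ℝ} {x : ℝ} (h : ContDiffAt ℝ n f x) :
    ∃ s : Set ℝ, IsOpen s ∧ x ∈ s ∧ ContDiffOn ℝ n f s := by
  obtain ⟨u, hu, hcd⟩ := h.contDiffOn le_rfl (by simp)
  obtain ⟨s, hsu, hso, hxs⟩ := mem_nhds_iff.1 hu
  exact ⟨s, hso, hxs, hcd.mono hsu⟩

private lemma iteratedDeriv_zero_fun' (n : ℕ) (x : ℝ) :
    iteratedDeriv n (fun _ : ℝ => (0:ℝ)) x = 0 := by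
  induction n generalizing x with
  | zero => simp
  | succ k ih =>
    rw [iteratedDeriv_succ']
    simp only [deriv_const']
    exact ih x

private lemma iteratedDeriv_neg_at (n : ℕ) (B : ℝ → ℝ) (x : ℝ) :
    iteratedDeriv n (fun y => -(B y)) x = -iteratedDeriv n B x := by
  induction n generalizing B x with
  | zero => simp
  | succ k ih =>
    rw [iteratedDeriv_succ', iteratedDeriv_succ']
    have : deriv (fun y => -(B y)) = fun y => -(deriv B y) := funext fun y => deriv.neg
    rw [this]
    exact ih _ _

private lemma iteratedDeriv_add_at (n : ℕ) {A B : ℝ → ℝ} {x : ℝ}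
    (hA : ContDiffAt ℝ n A x) (hB : ContDiffAt ℝ n B x) :
    iteratedDeriv n (fun y => A y + B y) x = iteratedDeriv n A x + iteratedDeriv n B x := by
  induction n generalizing A B x with
  | zero => simp
  | succ k ih =>
    obtain ⟨s, hso, hxs, hA'⟩ := contDiffAt_open _ hA
    obtain ⟨t, hto, hxt, hB'⟩ := contDiffAt_open _ hB
    have hvo : IsOpen (s ∩ t) := hso.inter hto
    have hxv : x ∈ s ∩ t := ⟨hxs, hxt⟩
    have hAv : ContDiffOn ℝ (k+1) A (s ∩ t) := by exact_mod_cast hA'.mono inter_subset_left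
    have hBv : ContDiffOn ℝ (k+1) B (s ∩ t) := by exact_mod_cast hB'.mono inter_subset_right
    have h1 : (1 : WithTop ℕ∞) ≤ ((k+1 : ℕ) : WithTop ℕ∞) :=
      by exact_mod_cast Nat.succ_le_succ (Nat.zero_le k)
    have hdA : ∀ y ∈ s ∩ t, DifferentiableAt ℝ A y := fun y hy =>
      (hAv.differentiableOn (by simp)).differentiableAt (hvo.mem_nhds hy)
    have hdB : ∀ y ∈ s ∩ t, DifferentiableAt ℝ B y := fun y hy =>
      (hBv.differentiableOn (by simp)).differentiableAt (hvo.mem_nhds hy)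
    have hev : deriv (fun y => A y + B y) =ᶠ[𝓝 x] fun y => deriv A y + deriv B y := by
      filter_upwards [hvo.mem_nhds hxv] with y hy
      exact deriv_add (hdA y hy) (hdB y hy)
    have hcast : ((k : ℕ) : WithTop ℕ∞) + 1 ≤ ((k+1 : ℕ) : WithTop ℕ∞) := by norm_cast
    have hA'' : ContDiffAt ℝ k (deriv A) x :=
      (hAv.deriv_of_isOpen hvo hcast).contDiffAt (hvo.mem_nhds hxv)
    have hB'' : ContDiffAt ℝ k (deriv B) x :=
      (hBv.deriv_of_isOpen hvo hcast).contDiffAt (hvo.mem_nhds hxv)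
    rw [iteratedDeriv_succ', iteratedDeriv_succ' (n := k) (f := A),
      iteratedDeriv_succ' (n := k) (f := B), hev.iteratedDeriv_eq k]
    exact ih hA'' hB''

private lemma iteratedDeriv_sub_at (n : ℕ) {A B : ℝ → ℝ} {x : ℝ}
    (hA : ContDiffAt ℝ n A x) (hB : ContDiffAt ℝ n B x) :
    iteratedDeriv n (fun y => A y - B y) x = iteratedDeriv n A x - iteratedDeriv n B x := by
  have : (fun y => A y - B y) = fun y => A y + (-(B y)) := funext fun y => by ring
  rw [this, iteratedDeriv_add_at n hA hB.neg, iteratedDeriv_neg_at]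
  ring

section LeibnizSect
variable {Adummy : ℝ}
private lemma leibniz_at (n : ℕ) {A B : ℝ → ℝ} {x : ℝ}
    (hA : ContDiffAt ℝ n A x) (hB : ContDiffAt ℝ n B x) :
    iteratedDeriv n (fun y => A y * B y) x =
      ∑ i ∈ Finset.range (n + 1),
        (n.choose i : ℝ) * (iteratedDeriv i A x * iteratedDeriv (n - i) B x) := by
  induction n generalizing A B x with
  | zero => simp
  | succ k ih =>
    obtain ⟨s, hso, hxs, hA'⟩ := contDiffAt_open _ hA
    obtain ⟨t, hto, hxt, hB'⟩ := contDiffAt_open _ hB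
    have hvo : IsOpen (s ∩ t) := hso.inter hto
    have hxv : x ∈ s ∩ t := ⟨hxs, hxt⟩
    have hAv : ContDiffOn ℝ (k+1) A (s ∩ t) := by exact_mod_cast hA'.mono inter_subset_left
    have hBv : ContDiffOn ℝ (k+1) B (s ∩ t) := by exact_mod_cast hB'.mono inter_subset_right
    have h1 : (1 : WithTop ℕ∞) ≤ ((k+1 : ℕ) : WithTop ℕ∞) :=
      by exact_mod_cast Nat.succ_le_succ (Nat.zero_le k)
    have hdA : ∀ y ∈ s ∩ t, DifferentiableAt ℝ A y := fun y hy =>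
      (hAv.differentiableOn (by simp)).differentiableAt (hvo.mem_nhds hy)
    have hdB : ∀ y ∈ s ∩ t, DifferentiableAt ℝ B y := fun y hy =>
      (hBv.differentiableOn (by simp)).differentiableAt (hvo.mem_nhds hy)
    have hev : deriv (fun y => A y * B y) =ᶠ[𝓝 x]
        fun y => deriv A y * B y + A y * deriv B y := by
      filter_upwards [hvo.mem_nhds hxv] with y hy
      exact deriv_mul (hdA y hy) (hdB y hy)
    have hcast : ((k : ℕ) : WithTop ℕ∞) + 1 ≤ ((k+1 : ℕ) : WithTop ℕ∞) := by norm_cast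
    have hkk : ((k : ℕ) : WithTop ℕ∞) ≤ ((k+1 : ℕ) : WithTop ℕ∞) := by
      exact_mod_cast Nat.le_succ k
    have hA'' : ContDiffAt ℝ k (deriv A) x :=
      (hAv.deriv_of_isOpen hvo hcast).contDiffAt (hvo.mem_nhds hxv)
    have hB'' : ContDiffAt ℝ k (deriv B) x :=
      (hBv.deriv_of_isOpen hvo hcast).contDiffAt (hvo.mem_nhds hxv)
    have hAk : ContDiffAt ℝ k A x := (hAv.of_le hkk).contDiffAt (hvo.mem_nhds hxv)
    have hBk : ContDiffAt ℝ k B x := (hBv.of_le hkk).contDiffAt (hvo.mem_nhds hxv)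
    rw [iteratedDeriv_succ', hev.iteratedDeriv_eq k,
      iteratedDeriv_add_at k (hA''.mul hBk) (hAk.mul hB''), ih hA'' hBk, ih hAk hB'']
    -- now pure algebra with sums
    have e1 : ∀ i : ℕ, iteratedDeriv i (deriv A) x = iteratedDeriv (i+1) A x := fun i => by
      rw [iteratedDeriv_succ']
    have e2 : ∀ i : ℕ, iteratedDeriv i (deriv B) x = iteratedDeriv (i+1) B x := fun i => by
      rw [iteratedDeriv_succ']
    simp only [e1, e2]
    set u : ℕ → ℝ := fun i => iteratedDeriv i A x with hu
    set v : ℕ → ℝ := fun i => iteratedDeriv i B x with hv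
    -- goal: ∑_{i<k+1} C(k,i) u(i+1) v(k-i) + ∑_{i<k+1} C(k,i) u i v(k-i+1)
    --      = ∑_{i<k+2} C(k+1,i) u i v(k+1-i)
    rw [Finset.sum_range_succ (fun i => (k.choose i : ℝ) * (u (i+1) * v (k - i))) k]
    rw [Finset.sum_range_succ' (fun i => (k.choose i : ℝ) * (u i * v (k - i + 1))) k]
    rw [Finset.sum_range_succ (fun i => ((k+1).choose i : ℝ) * (u i * v (k + 1 - i))) (k+1)]
    rw [Finset.sum_range_succ' (fun i => ((k+1).choose i : ℝ) * (u i * v (k + 1 - i))) k]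
    have hrw : ∀ i ∈ Finset.range k,
        ((k+1).choose (i+1) : ℝ) * (u (i+1) * v (k + 1 - (i+1)))
          = (k.choose i : ℝ) * (u (i+1) * v (k - i))
            + (k.choose (i+1) : ℝ) * (u (i+1) * v (k - i)) := by
      intro i hi
      have : k + 1 - (i+1) = k - i := by omega
      rw [this, Nat.choose_succ_succ, Nat.cast_add]
      ring
    rw [Finset.sum_congr rfl hrw, Finset.sum_add_distrib]
    have hrw2 : ∀ i ∈ Finset.range k,
        (k.choose (i+1) : ℝ) * (u (i+1) * v (k - i))
          = (k.choose (i+1) : ℝ) * (u (i+1) * v (k - (i+1) + 1)) := by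
      intro i hi
      simp only [Finset.mem_range] at hi
      have : k - i = k - (i+1) + 1 := by omega
      rw [this]
    rw [Finset.sum_congr rfl hrw2]
    simp [Nat.sub_self, Nat.choose_self, Nat.choose_zero_right, Nat.sub_add_cancel]
    ring

end LeibnizSect

noncomputable def pInt (μ : Measure ℝ) (c x : ℝ) (j : ℕ) (φ : ℝ → ℝ) : ℝ → ℝ :=
  fun u => ∫ t in Set.Icc (0:ℝ) 1, (t - c)^j * φ (x + (t - c) * u) ∂μ

section Param
variable {μ : Measure ℝ} [IsProbabilityMeasure μ]
variable {I : Set ℝ} {c x δ : ℝ}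

private lemma zmem (hδ : 0 < δ) (hc : ∀ t ∈ Set.Icc (0:ℝ) 1, |t - c| ≤ 1)
    (hK : Set.Icc (x - δ) (x + δ) ⊆ I) {u : ℝ} (hu : |u| ≤ δ) {t : ℝ}
    (ht : t ∈ Set.Icc (0:ℝ) 1) : x + (t - c) * u ∈ Set.Icc (x - δ) (x + δ) := by
  have h1 : |(t - c) * u| ≤ δ := by
    rw [abs_mul]
    calc |t - c| * |u| ≤ 1 * δ :=
          mul_le_mul (hc t ht) hu (abs_nonneg u) zero_le_one
      _ = δ := one_mul δ
  rw [abs_le] at h1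
  constructor <;> linarith [h1.1, h1.2]

private lemma contOn_integrand (hδ : 0 < δ) (hc : ∀ t ∈ Set.Icc (0:ℝ) 1, |t - c| ≤ 1)
    (hK : Set.Icc (x - δ) (x + δ) ⊆ I) {ψ : ℝ → ℝ} (hψ : ContinuousOn ψ I)
    (j : ℕ) {u : ℝ} (hu : |u| ≤ δ) :
    ContinuousOn (fun t => (t - c)^j * ψ (x + (t - c) * u)) (Set.Icc (0:ℝ) 1) := by
  apply ContinuousOn.mul
  · fun_prop
  · apply hψ.comp (by fun_prop : ContinuousOn (fun t : ℝ => x + (t - c) * u) (Set.Icc (0:ℝ) 1))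
    exact fun t ht => hK (zmem hδ hc hK hu ht)

private lemma pInt_hasDerivAt (hIopen : IsOpen I) (hδ : 0 < δ)
    (hc : ∀ t ∈ Set.Icc (0:ℝ) 1, |t - c| ≤ 1) (hK : Set.Icc (x - δ) (x + δ) ⊆ I)
    {φ : ℝ → ℝ} (hφ : ContDiffOn ℝ 1 φ I) (j : ℕ) {u₀ : ℝ}
    (hu₀ : u₀ ∈ Metric.ball (0:ℝ) δ) :
    HasDerivAt (pInt μ c x j φ) (pInt μ c x (j+1) (deriv φ) u₀) u₀ := by
  haveI : IsFiniteMeasureOnCompacts μ := ⟨fun K _ => measure_lt_top μ K⟩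
  have hφc : ContinuousOn φ I := hφ.continuousOn
  have hφ' : ContinuousOn (deriv φ) I := hφ.continuousOn_deriv_of_isOpen hIopen le_rfl
  obtain ⟨B, hB⟩ := isCompact_Icc.exists_bound_of_continuousOn (hφ'.mono hK)
  rw [Metric.mem_ball, Real.dist_eq, sub_zero] at hu₀
  set ε := δ - |u₀| with hε
  have hεpos : 0 < ε := by simp [hε]; linarith
  have hball : ∀ u ∈ Metric.ball u₀ ε, |u| ≤ δ := by
    intro u hu
    rw [Metric.mem_ball, Real.dist_eq] at hu
    calc |u| = |u₀ + (u - u₀)| := by ring_nf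
      _ ≤ |u₀| + |u - u₀| := abs_add_le _ _
      _ ≤ δ := by linarith
  have hin : ∀ u ∈ Metric.ball u₀ ε, ∀ t ∈ Set.Icc (0:ℝ) 1, x + (t - c) * u ∈ I :=
    fun u hu t ht => hK (zmem hδ hc hK (hball u hu) ht)
  have main := hasDerivAt_integral_of_dominated_loc_of_deriv_le (μ := μ.restrict (Set.Icc 0 1))
    (F := fun u t => (t - c)^j * φ (x + (t - c) * u))
    (F' := fun u t => (t - c)^(j+1) * deriv φ (x + (t - c) * u))
    (bound := fun _ => B) (x₀ := u₀) (Metric.ball_mem_nhds u₀ hεpos)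
    ?_ ?_ ?_ ?_ ?_ ?_
  · exact main.2
  · filter_upwards [Metric.isOpen_ball.mem_nhds (Metric.mem_ball_self hεpos)] with u hu
    exact (contOn_integrand hδ hc hK hφc j (hball u hu)).aestronglyMeasurable measurableSet_Icc
  · exact (contOn_integrand hδ hc hK hφc j
      (hball u₀ (Metric.mem_ball_self hεpos))).integrableOn_compact isCompact_Icc
  · exact (contOn_integrand hδ hc hK hφ' (j+1)
      (hball u₀ (Metric.mem_ball_self hεpos))).aestronglyMeasurable measurableSet_Icc
  · filter_upwards [ae_restrict_mem measurableSet_Icc] with t ht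
    intro u hu
    have hz := zmem hδ hc hK (hball u hu) ht
    have h1 : |t - c| ^ (j+1) ≤ 1 := pow_le_one₀ (abs_nonneg _) (hc t ht)
    calc ‖(t - c)^(j+1) * deriv φ (x + (t - c) * u)‖
        = |t - c|^(j+1) * ‖deriv φ (x + (t - c) * u)‖ := by
          rw [norm_mul, norm_pow]; rfl
      _ ≤ 1 * B := mul_le_mul h1 (hB _ hz) (norm_nonneg _)
          (le_trans (norm_nonneg _) (hB _ hz) |>.trans (le_refl B) |> fun _ => zero_le_one)
      _ = B := one_mul B
  · exact integrable_const B
  · filter_upwards [ae_restrict_mem measurableSet_Icc] with t ht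
    intro u hu
    have hz : x + (t - c) * u ∈ I := hin u hu t ht
    have h1 : HasDerivAt (fun u : ℝ => x + (t - c) * u) (t - c) u := by
      simpa using ((hasDerivAt_id u).const_mul (t - c)).const_add x
    have h2 : DifferentiableAt ℝ φ (x + (t - c) * u) :=
      (hφ.differentiableOn one_ne_zero).differentiableAt (hIopen.mem_nhds hz)
    have h3 := (h2.hasDerivAt.comp u h1)
    have h4 := h3.const_mul ((t - c)^j)
    have : (t - c)^j * (deriv φ (x + (t - c) * u) * (t - c))
        = (t - c)^(j+1) * deriv φ (x + (t - c) * u) := by ring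
    rw [this] at h4
    exact h4
end Param

section Param2
variable {μ : Measure ℝ} [IsProbabilityMeasure μ]
variable {I : Set ℝ} {c x δ : ℝ}

private lemma pInt_contDiffOn (hIopen : IsOpen I) (hδ : 0 < δ)
    (hc : ∀ t ∈ Set.Icc (0:ℝ) 1, |t - c| ≤ 1) (hK : Set.Icc (x - δ) (x + δ) ⊆ I)
    (k : ℕ) {φ : ℝ → ℝ} (hφ : ContDiffOn ℝ k φ I) (j : ℕ) :
    ContDiffOn ℝ k (pInt μ c x j φ) (Metric.ball (0:ℝ) δ) := by
  haveI : IsFiniteMeasureOnCompacts μ := ⟨fun K _ => measure_lt_top μ K⟩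
  induction k generalizing j φ with
  | zero =>
    obtain ⟨B, hB⟩ := isCompact_Icc.exists_bound_of_continuousOn (hφ.continuousOn.mono hK)
    rw [show ((0:ℕ) : WithTop ℕ∞) = 0 by norm_cast, contDiffOn_zero]
    apply continuousOn_of_dominated (bound := fun _ => B)
    · intro u hu
      rw [Metric.mem_ball, Real.dist_eq, sub_zero] at hu
      exact (contOn_integrand hδ hc hK hφ.continuousOn j
        hu.le).aestronglyMeasurable measurableSet_Icc
    · intro u hu
      rw [Metric.mem_ball, Real.dist_eq, sub_zero] at hu
      filter_upwards [ae_restrict_mem measurableSet_Icc] with t ht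
      have hz := zmem hδ hc hK hu.le ht
      have h1 : |t - c| ^ j ≤ 1 := pow_le_one₀ (abs_nonneg _) (hc t ht)
      calc ‖(t - c)^j * φ (x + (t - c) * u)‖
          = |t - c|^j * ‖φ (x + (t - c) * u)‖ := by rw [norm_mul, norm_pow]; rfl
        _ ≤ 1 * B := mul_le_mul h1 (hB _ hz) (norm_nonneg _) zero_le_one
        _ = B := one_mul B
    · exact integrable_const B
    · filter_upwards [ae_restrict_mem measurableSet_Icc] with t ht
      apply ContinuousOn.mul continuousOn_const
      apply hφ.continuousOn.comp (by fun_prop :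
        ContinuousOn (fun u : ℝ => x + (t - c) * u) (Metric.ball (0:ℝ) δ))
      intro u hu
      rw [Metric.mem_ball, Real.dist_eq, sub_zero] at hu
      exact hK (zmem hδ hc hK hu.le ht)
  | succ k ih =>
    rw [show ((k+1:ℕ) : WithTop ℕ∞) = (k : WithTop ℕ∞) + 1 by norm_cast,
      contDiffOn_succ_iff_deriv_of_isOpen Metric.isOpen_ball]
    have h1 : (1 : WithTop ℕ∞) ≤ ((k+1:ℕ) : WithTop ℕ∞) :=
      by exact_mod_cast Nat.succ_le_succ (Nat.zero_le k)
    refine ⟨fun u hu => ?_, fun h => by simp at h, ?_⟩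
    · exact ((pInt_hasDerivAt hIopen hδ hc hK (hφ.of_le h1) j hu).differentiableAt
        ).differentiableWithinAt
    · have hd : ContDiffOn ℝ k (deriv φ) I :=
        hφ.deriv_of_isOpen hIopen (by norm_cast)
      exact (ih hd (j+1)).congr fun u hu =>
        ((pInt_hasDerivAt hIopen hδ hc hK (hφ.of_le h1) j hu).deriv)

private lemma pInt_iteratedDeriv (hIopen : IsOpen I) (hδ : 0 < δ)
    (hc : ∀ t ∈ Set.Icc (0:ℝ) 1, |t - c| ≤ 1) (hK : Set.Icc (x - δ) (x + δ) ⊆ I)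
    (k : ℕ) {φ : ℝ → ℝ} (hφ : ContDiffOn ℝ k φ I) (j : ℕ) {u : ℝ}
    (hu : u ∈ Metric.ball (0:ℝ) δ) :
    iteratedDeriv k (pInt μ c x j φ) u = pInt μ c x (j+k) (iteratedDeriv k φ) u := by
  induction k generalizing j φ u with
  | zero => simp [iteratedDeriv_zero]
  | succ k ih =>
    have h1 : (1 : WithTop ℕ∞) ≤ ((k+1:ℕ) : WithTop ℕ∞) :=
      by exact_mod_cast Nat.succ_le_succ (Nat.zero_le k)
    have hev : deriv (pInt μ c x j φ) =ᶠ[𝓝 u] pInt μ c x (j+1) (deriv φ) := by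
      filter_upwards [Metric.isOpen_ball.mem_nhds hu] with v hv
      exact (pInt_hasDerivAt hIopen hδ hc hK (hφ.of_le h1) j hv).deriv
    have hd : ContDiffOn ℝ k (deriv φ) I := hφ.deriv_of_isOpen hIopen (by norm_cast)
    rw [iteratedDeriv_succ', hev.iteratedDeriv_eq k, ih hd (j+1) hu,
      ← iteratedDeriv_succ']
    congr 1
    omega
end Param2

end AuxSect

/-- Differentiability of `m_x` and the fundamental derivative identity. -/
theorem statement10 (I : Set ℝ) (hIopen : IsOpen I) (hIne : I.Nonempty)
    (hIconn : I.OrdConnected)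
    (n : ℕ) (hn : 1 ≤ n) (f g : ℝ → ℝ) (hfg : ClassC n I f g)
    (μ : Measure ℝ) [IsProbabilityMeasure μ] (hsupp : μ (Set.Icc (0:ℝ) 1)ᶜ = 0) :
    ∀ x ∈ I,
      ContDiffAt ℝ n (mfun I f g μ x) 0 ∧
      mfun I f g μ x 0 = x ∧
      ∑ i ∈ Finset.range (n + 1),
        (n.choose i : ℝ) * cmom μ i *
          (iteratedDeriv i f x * iteratedDeriv (n - i) (g ∘ mfun I f g μ x) 0 -
            iteratedDeriv i g x * iteratedDeriv (n - i) (f ∘ mfun I f g μ x) 0) = 0 := by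
  intro x hx
  obtain ⟨hf, hg, hgpos, hW⟩ := hfg
  haveI : IsFiniteMeasureOnCompacts μ := ⟨fun K _ => measure_lt_top μ K⟩
  have n1 : (1 : WithTop ℕ∞) ≤ (n : WithTop ℕ∞) := by exact_mod_cast hn
  set c := mom1 μ with hcdef
  -- measure basics
  have hIcc1 : μ (Set.Icc (0:ℝ) 1) = 1 := by
    have h := measure_add_measure_compl (μ := μ) (measurableSet_Icc (a := (0:ℝ)) (b := 1))
    rw [hsupp, add_zero, measure_univ] at h
    exact h
  have haet : ∀ᵐ t ∂(μ.restrict (Set.Icc (0:ℝ) 1)), t ∈ Set.Icc (0:ℝ) 1 :=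
    ae_restrict_mem measurableSet_Icc
  have hint_id : IntegrableOn (fun t : ℝ => t) (Set.Icc (0:ℝ) 1) μ :=
    continuous_id.continuousOn.integrableOn_compact isCompact_Icc
  have hc0 : 0 ≤ c := by
    rw [hcdef, mom1]
    exact integral_nonneg_of_ae (haet.mono fun t ht => ht.1)
  have hc1' : c ≤ 1 := by
    rw [hcdef, mom1]
    have h2 : ∫ t in Set.Icc (0:ℝ) 1, t ∂μ ≤ ∫ _ in Set.Icc (0:ℝ) 1, (1:ℝ) ∂μ :=
      integral_mono_ae hint_id (integrable_const 1) (haet.mono fun t ht => ht.2)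
    simpa [integral_const, Measure.restrict_apply_univ, measureReal_def, hIcc1] using h2
  have hcabs : ∀ t ∈ Set.Icc (0:ℝ) 1, |t - c| ≤ 1 := by
    intro t ht
    rw [abs_le]
    constructor <;> [linarith [ht.1]; linarith [ht.2]]
  -- delta
  obtain ⟨ε, hεpos, hball⟩ := Metric.isOpen_iff.1 hIopen x hx
  set δ := ε/2 with hδdef
  have hδ : 0 < δ := by positivity
  have hK : Set.Icc (x - δ) (x + δ) ⊆ I := by
    intro y hy
    apply hball
    rw [Metric.mem_ball, Real.dist_eq]
    have := hy.1; have := hy.2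
    rw [abs_lt]
    constructor <;> [linarith; linarith]
  have h0ball : (0:ℝ) ∈ Metric.ball (0:ℝ) δ := Metric.mem_ball_self hδ
  -- the strictly monotone function h
  set h : ℝ → ℝ := fun y => f y / g y with hhdef
  have hh : ContDiffOn ℝ n h I := hf.div hg fun y hy => (hgpos y hy).ne'
  have hdf : ∀ y ∈ I, DifferentiableAt ℝ f y := fun y hy =>
    (hf.differentiableOn (by simp; omega)).differentiableAt (hIopen.mem_nhds hy)
  have hdg : ∀ y ∈ I, DifferentiableAt ℝ g y := fun y hy =>
    (hg.differentiableOn (by simp; omega)).differentiableAt (hIopen.mem_nhds hy)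
  have hderiv : ∀ y ∈ I, deriv h y = Wr 1 0 f g y / (g y)^2 := by
    intro y hy
    rw [hhdef]
    rw [deriv_fun_div (hdf y hy) (hdg y hy) (hgpos y hy).ne']
    simp [Wr, iteratedDeriv_one, iteratedDeriv_zero]
  have hderiv_ne : ∀ y ∈ I, deriv h y ≠ 0 := fun y hy => by
    rw [hderiv y hy]
    exact div_ne_zero (hW y hy) (pow_ne_zero _ (hgpos y hy).ne')
  have hinj : Set.InjOn h I := by
    intro a ha b hb hab
    rcases lt_trichotomy a b with hlt | heq | hlt
    · exfalso
      have hsub : Set.Icc a b ⊆ I := hIconn.out ha hb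
      obtain ⟨ξ, hξ, hξ0⟩ := exists_deriv_eq_zero hlt (hh.continuousOn.mono hsub) hab
      exact hderiv_ne ξ (hsub ⟨hξ.1.le, hξ.2.le⟩) hξ0
    · exact heq
    · exfalso
      have hsub : Set.Icc b a ⊆ I := hIconn.out hb ha
      obtain ⟨ξ, hξ, hξ0⟩ := exists_deriv_eq_zero hlt (hh.continuousOn.mono hsub) hab.symm
      exact hderiv_ne ξ (hsub ⟨hξ.1.le, hξ.2.le⟩) hξ0
  -- local inverse
  have hcdAt : ContDiffAt ℝ n h x := hh.contDiffAt (hIopen.mem_nhds hx)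
  have hdx : deriv h x ≠ 0 := hderiv_ne x hx
  have hdiffx : DifferentiableAt ℝ h x :=
    (hh.differentiableOn (by simp; omega)).differentiableAt (hIopen.mem_nhds hx)
  set e : ℝ ≃L[ℝ] ℝ := ContinuousLinearEquiv.unitsEquivAut ℝ (Units.mk0 (deriv h x) hdx)
    with hedef
  have hFD : HasFDerivAt h (e : ℝ →L[ℝ] ℝ) x := by
    have h1 := hdiffx.hasDerivAt
    rw [hasDerivAt_iff_hasFDerivAt] at h1
    have he : (e : ℝ →L[ℝ] ℝ) = ContinuousLinearMap.toSpanSingleton ℝ (deriv h x) := by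
      ext; simp [hedef]
    rw [he]; exact h1
  set L := hcdAt.localInverse hFD (by simp; omega) with hLdef
  have hLcd : ContDiffAt ℝ n L (h x) := hcdAt.to_localInverse hFD (by simp; omega)
  have hst := hcdAt.hasStrictFDerivAt' hFD (by simp; omega)
  have hLright : ∀ᶠ y in 𝓝 (h x), h (L y) = y := hst.eventually_right_inverse
  have hLcont : ContinuousAt L (h x) := hst.localInverse_continuousAt
  have hLx : L (h x) = x := hcdAt.localInverse_apply_image hFD (by simp; omega)
  -- F and G and q
  have hF0 : ∀ φ : ℝ → ℝ, pInt μ c x 0 φ 0 = φ x := by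
    intro φ
    unfold pInt
    simp [integral_const, Measure.restrict_apply_univ, measureReal_def, hIcc1]
  set F := pInt μ c x 0 f with hFdef
  set Gg := pInt μ c x 0 g with hGdef
  set q : ℝ → ℝ := fun u => F u / Gg u with hqdef
  have hq0 : q 0 = h x := by
    rw [hqdef]
    simp only
    rw [hFdef, hGdef, hF0 f, hF0 g, hhdef]
  have hFcd : ContDiffAt ℝ n F 0 :=
    (pInt_contDiffOn hIopen hδ hcabs hK n hf 0).contDiffAt (Metric.isOpen_ball.mem_nhds h0ball)
  have hGcd : ContDiffAt ℝ n Gg 0 :=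
    (pInt_contDiffOn hIopen hδ hcabs hK n hg 0).contDiffAt (Metric.isOpen_ball.mem_nhds h0ball)
  have hGg0 : Gg 0 = g x := hF0 g
  have hGne : ∀ᶠ u in 𝓝 (0:ℝ), Gg u ≠ 0 :=
    (hGcd.continuousAt).eventually_ne (by rw [hGg0]; exact (hgpos x hx).ne')
  have hqcd : ContDiffAt ℝ n q 0 := hFcd.div hGcd (by rw [hGg0]; exact (hgpos x hx).ne')
  have hqcont : ContinuousAt q 0 := hqcd.continuousAt
  -- mfun in terms of q
  have hmf : ∀ u : ℝ, mfun I f g μ x u = Function.invFunOn h I (q u) := by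
    intro u
    unfold mfun Mmean
    rw [hqdef, hFdef, hGdef]
    simp only
    unfold pInt
    rw [hhdef]
    congr 2
    · apply integral_congr_ae
      filter_upwards with t
      rw [pow_zero, one_mul]
      congr 1
      ring
    · apply integral_congr_ae
      filter_upwards with t
      rw [pow_zero, one_mul]
      congr 1
      ring
  -- eventual identification with the local inverse
  have hy_ev : ∀ᶠ y in 𝓝 (h x), h (L y) = y ∧ L y ∈ I := by
    apply hLright.and
    have : I ∈ 𝓝 (L (h x)) := by rw [hLx]; exact hIopen.mem_nhds hx
    exact hLcont.eventually_mem this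
  have hqev : ∀ᶠ u in 𝓝 (0:ℝ), h (L (q u)) = q u ∧ L (q u) ∈ I := by
    have ht := hqcont.tendsto
    rw [hq0] at ht
    exact ht.eventually hy_ev
  have hmLq : ∀ᶠ u in 𝓝 (0:ℝ), mfun I f g μ x u = L (q u) := by
    filter_upwards [hqev] with u hu
    rw [hmf u]
    have hex : ∃ a ∈ I, h a = q u := ⟨L (q u), hu.2, hu.1⟩
    exact hinj (Function.invFunOn_mem hex) hu.2 ((Function.invFunOn_eq hex).trans hu.1.symm)
  have hmcd : ContDiffAt ℝ n (mfun I f g μ x) 0 := by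
    have hLcd' : ContDiffAt ℝ n L (q 0) := by rw [hq0]; exact hLcd
    exact (hLcd'.comp 0 hqcd).congr_of_eventuallyEq hmLq
  have hm0 : mfun I f g μ x 0 = x := by
    rw [hmf 0, hq0]
    have hex : ∃ a ∈ I, h a = h x := ⟨x, hx, rfl⟩
    exact hinj (Function.invFunOn_mem hex) hx (Function.invFunOn_eq hex)
  refine ⟨hmcd, hm0, ?_⟩
  -- the identity
  have hcomp_f : (f ∘ mfun I f g μ x) = fun u => f (mfun I f g μ x u) := rfl
  have hcomp_g : (g ∘ mfun I f g μ x) = fun u => g (mfun I f g μ x u) := rfl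
  rw [hcomp_f, hcomp_g]
  set m := mfun I f g μ x with hmdef
  set fm : ℝ → ℝ := fun u => f (m u) with hfmdef
  set gm : ℝ → ℝ := fun u => g (m u) with hgmdef
  have hfmcd : ContDiffAt ℝ n fm 0 := by
    have : ContDiffAt ℝ n f (m 0) := by rw [hm0]; exact hf.contDiffAt (hIopen.mem_nhds hx)
    exact this.comp 0 hmcd
  have hgmcd : ContDiffAt ℝ n gm 0 := by
    have : ContDiffAt ℝ n g (m 0) := by rw [hm0]; exact hg.contDiffAt (hIopen.mem_nhds hx)
    exact this.comp 0 hmcd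
  -- P vanishes near 0
  have hPev : (fun u => fm u * Gg u - gm u * F u) =ᶠ[𝓝 (0:ℝ)] fun _ => (0:ℝ) := by
    filter_upwards [hmLq, hqev, hGne] with u h1 h2 h3
    have hmI : m u ∈ I := by rw [h1]; exact h2.2
    have hhm : h (m u) = q u := by rw [h1]; exact h2.1
    have hgm : g (m u) ≠ 0 := (hgpos _ hmI).ne'
    have hcross : f (m u) * Gg u = F u * g (m u) := by
      have := hhm
      rw [hhdef] at this
      simp only at this
      rw [hqdef] at this
      simp only at this
      exact (div_eq_div_iff hgm h3).1 this
    simp only [hfmdef, hgmdef]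
    rw [hcross]
    ring
  have hP0 : iteratedDeriv n (fun u => fm u * Gg u - gm u * F u) 0 = 0 := by
    rw [hPev.iteratedDeriv_eq n, iteratedDeriv_zero_fun' n 0]
  rw [iteratedDeriv_sub_at n (hfmcd.mul hGcd) (hgmcd.mul hFcd), leibniz_at n hfmcd hGcd,
    leibniz_at n hgmcd hFcd] at hP0
  -- moment formulas
  have hmom : ∀ k, k ≤ n → ∀ {φ : ℝ → ℝ}, ContDiffOn ℝ n φ I →
      iteratedDeriv k (pInt μ c x 0 φ) 0 = cmom μ k * iteratedDeriv k φ x := by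
    intro k hk φ hφ
    have hkc : ((k:ℕ) : WithTop ℕ∞) ≤ (n : WithTop ℕ∞) := by exact_mod_cast hk
    rw [pInt_iteratedDeriv hIopen hδ hcabs hK k (hφ.of_le hkc) 0 h0ball]
    unfold pInt
    simp only [mul_zero, add_zero, zero_add]
    rw [integral_mul_const]
    rw [cmom, ← hcdef]
  have hFk : ∀ k, k ≤ n → iteratedDeriv k F 0 = cmom μ k * iteratedDeriv k f x := by
    intro k hk; rw [hFdef]; exact hmom k hk hf
  have hGk : ∀ k, k ≤ n → iteratedDeriv k Gg 0 = cmom μ k * iteratedDeriv k g x := by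
    intro k hk; rw [hGdef]; exact hmom k hk hg
  have hkey : ∑ i ∈ Finset.range (n + 1),
      ((n.choose i : ℝ) * cmom μ (n - i) *
        (iteratedDeriv i fm 0 * iteratedDeriv (n - i) g x
          - iteratedDeriv i gm 0 * iteratedDeriv (n - i) f x)) = 0 := by
    have step : ∑ i ∈ Finset.range (n + 1),
        ((n.choose i : ℝ) * cmom μ (n - i) *
          (iteratedDeriv i fm 0 * iteratedDeriv (n - i) g x
            - iteratedDeriv i gm 0 * iteratedDeriv (n - i) f x))
        = ∑ i ∈ Finset.range (n + 1),
            (n.choose i : ℝ) * (iteratedDeriv i fm 0 * iteratedDeriv (n - i) Gg 0) -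
          ∑ i ∈ Finset.range (n + 1),
            (n.choose i : ℝ) * (iteratedDeriv i gm 0 * iteratedDeriv (n - i) F 0) := by
      rw [← Finset.sum_sub_distrib]
      apply Finset.sum_congr rfl
      intro i hi
      rw [Finset.mem_range] at hi
      rw [hFk (n - i) (by omega), hGk (n - i) (by omega)]
      ring
    rw [step, hP0]
  -- reindex
  rw [← Finset.sum_range_reflect]
  have hterm : ∀ i ∈ Finset.range (n + 1),
      (n.choose (n + 1 - 1 - i) : ℝ) * cmom μ (n + 1 - 1 - i) *
          (iteratedDeriv (n + 1 - 1 - i) f x * iteratedDeriv (n - (n + 1 - 1 - i)) gm 0 -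
            iteratedDeriv (n + 1 - 1 - i) g x * iteratedDeriv (n - (n + 1 - 1 - i)) fm 0)
        = -((n.choose i : ℝ) * cmom μ (n - i) *
            (iteratedDeriv i fm 0 * iteratedDeriv (n - i) g x
              - iteratedDeriv i gm 0 * iteratedDeriv (n - i) f x)) := by
    intro i hi
    rw [Finset.mem_range] at hi
    have e1 : n + 1 - 1 - i = n - i := by omega
    have e2 : n - (n - i) = i := by omega
    have e3 : n.choose (n - i) = n.choose i := Nat.choose_symm (by omega)
    rw [e1, e2, e3]
    ring
  rw [Finset.sum_congr rfl hterm, Finset.sum_neg_distrib, hkey, neg_zero]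
end

section
/- Let (f,g) ∈ C_2(I) and let μ be a Borel probability measure on [0,1]. Then for every fixed x ∈ I, the function m_x := m_{x;f,g;μ} is twice continuously differentiable in a neighborhood of 0 and satisfies m_x(0) = x, m_x'(0) = 0, and m_x''(0) = μ₂·Φ_{f,g}(x). -/
open MeasureTheory Set

section Aux
open Filter Metric
open scoped Topology

section Param
variable {ν : Measure ℝ} [IsFiniteMeasure ν] {φ φ' : ℝ → ℝ} {x m δ : ℝ}

lemma arg_mem_Icc {t u : ℝ} (hδ : 0 < δ) (ht : t ∈ Icc (0:ℝ) 1)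
    (hu : |u| ≤ δ / (1 + |m|)) : x + (t - m) * u ∈ Icc (x - δ) (x + δ) := by
  have h1 : (0:ℝ) < 1 + |m| := by positivity
  have h2 : |t - m| ≤ 1 + |m| := by
    calc |t - m| ≤ |t| + |m| := abs_sub _ _
      _ ≤ 1 + |m| := by
        have h3 : |t| ≤ 1 := abs_le.2 ⟨by linarith [ht.1], ht.2⟩
        linarith
  have : |(t - m) * u| ≤ δ := by
    rw [abs_mul]
    calc |t - m| * |u| ≤ (1 + |m|) * (δ / (1 + |m|)) :=
        mul_le_mul h2 hu (abs_nonneg _) (le_of_lt h1)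
      _ = δ := by field_simp
  rcases abs_le.1 this with ⟨ha, hb⟩
  constructor <;> linarith

lemma param_integrable
    (hmem : ∀ᵐ t ∂ν, t ∈ Icc (0:ℝ) 1)
    (hmeas : ∀ ψ : ℝ → ℝ, ContinuousOn ψ (Icc (0:ℝ) 1) → AEStronglyMeasurable ψ ν)
    (hδ : 0 < δ) (hφc : ContinuousOn φ (Icc (x - δ) (x + δ)))
    (k : ℕ) {u : ℝ} (hu : |u| ≤ δ / (1 + |m|)) :
    Integrable (fun t => (t - m) ^ k * φ (x + (t - m) * u)) ν := by
  have hK : IsCompact (Icc (x - δ) (x + δ)) := isCompact_Icc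
  obtain ⟨C, hC⟩ := hK.exists_bound_of_continuousOn hφc
  have habs : ∀ t ∈ Icc (0:ℝ) 1, |t - m| ≤ 1 + |m| := by
    intro t ht
    calc |t - m| ≤ |t| + |m| := abs_sub _ _
      _ ≤ 1 + |m| := by
        have : |t| ≤ 1 := abs_le.2 ⟨by linarith [ht.1], ht.2⟩
        linarith
  have hmeas' : AEStronglyMeasurable (fun t => (t - m) ^ k * φ (x + (t - m) * u)) ν := by
    refine hmeas _ (ContinuousOn.mul (by fun_prop) (hφc.comp
      (Continuous.continuousOn (by continuity)) fun t ht => arg_mem_Icc hδ ht hu))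
  refine Integrable.mono' (integrable_const ((1 + |m|) ^ k * C)) hmeas' ?_
  filter_upwards [hmem] with t ht
  rw [Real.norm_eq_abs, abs_mul, abs_pow]
  exact mul_le_mul (pow_le_pow_left₀ (abs_nonneg _) (habs t ht) k)
    (hC _ (arg_mem_Icc hδ ht hu)) (abs_nonneg _) (by positivity)

lemma param_hasDerivAt
    (hmem : ∀ᵐ t ∂ν, t ∈ Icc (0:ℝ) 1)
    (hmeas : ∀ ψ : ℝ → ℝ, ContinuousOn ψ (Icc (0:ℝ) 1) → AEStronglyMeasurable ψ ν)
    (hδ : 0 < δ)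
    (hd : ∀ y ∈ Icc (x - δ) (x + δ), HasDerivAt φ (φ' y) y)
    (hφ'c : ContinuousOn φ' (Icc (x - δ) (x + δ)))
    (k : ℕ) {u₀ : ℝ} (hu₀ : |u₀| < δ / (1 + |m|)) :
    HasDerivAt (fun u => ∫ t, (t - m) ^ k * φ (x + (t - m) * u) ∂ν)
      (∫ t, (t - m) ^ (k + 1) * φ' (x + (t - m) * u₀) ∂ν) u₀ := by
  set r := δ / (1 + |m|) with hr
  have hrpos : 0 < r := by positivity
  set ε := r - |u₀| with hε
  have hεpos : 0 < ε := by simp [hε]; linarith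
  have hball : ∀ u ∈ ball u₀ ε, |u| ≤ r := by
    intro u hu
    have : |u - u₀| < ε := by simpa [Real.dist_eq] using hu
    calc |u| = |u₀ + (u - u₀)| := by ring_nf
      _ ≤ |u₀| + |u - u₀| := abs_add_le _ _
      _ ≤ r := by linarith
  have hK : IsCompact (Icc (x - δ) (x + δ)) := isCompact_Icc
  have hφc : ContinuousOn φ (Icc (x - δ) (x + δ)) :=
    fun y hy => ((hd y hy).continuousAt).continuousWithinAt
  obtain ⟨C', hC'⟩ := hK.exists_bound_of_continuousOn hφ'c
  have habs : ∀ t ∈ Icc (0:ℝ) 1, |t - m| ≤ 1 + |m| := by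
    intro t ht
    calc |t - m| ≤ |t| + |m| := abs_sub _ _
      _ ≤ 1 + |m| := by
        have : |t| ≤ 1 := abs_le.2 ⟨by linarith [ht.1], ht.2⟩
        linarith
  refine (hasDerivAt_integral_of_dominated_loc_of_deriv_le (Metric.ball_mem_nhds u₀ hεpos)
      (F := fun u t => (t - m) ^ k * φ (x + (t - m) * u))
      (F' := fun u t => (t - m) ^ (k + 1) * φ' (x + (t - m) * u))
      (bound := fun _ => (1 + |m|) ^ (k + 1) * C')
      ?_ ?_ ?_ ?_ ?_ ?_).2
  · filter_upwards [Metric.ball_mem_nhds u₀ hεpos] with u hu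
    exact (param_integrable hmem hmeas hδ hφc k (hball u hu)).aestronglyMeasurable
  · exact param_integrable hmem hmeas hδ hφc k hu₀.le
  · exact (param_integrable hmem hmeas hδ hφ'c (k+1) hu₀.le).aestronglyMeasurable
  · filter_upwards [hmem] with t ht u hu
    rw [Real.norm_eq_abs, abs_mul, abs_pow]
    exact mul_le_mul (pow_le_pow_left₀ (abs_nonneg _) (habs t ht) (k+1))
      (hC' _ (arg_mem_Icc hδ ht (hball u hu))) (abs_nonneg _) (by positivity)
  · exact integrable_const _
  · filter_upwards [hmem] with t ht u hu
    have hin : HasDerivAt (fun u : ℝ => x + (t - m) * u) (t - m) u := by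
      simpa using ((hasDerivAt_id u).const_mul (t - m)).const_add x
    have hout : HasDerivAt φ (φ' (x + (t - m) * u)) (x + (t - m) * u) :=
      hd _ (arg_mem_Icc hδ ht (hball u hu))
    have := (hout.comp u hin).const_mul ((t - m) ^ k)
    simp only [Function.comp_def] at this
    convert this using 1
    rfl
    ring

lemma param_continuousAt
    (hmem : ∀ᵐ t ∂ν, t ∈ Icc (0:ℝ) 1)
    (hmeas : ∀ ψ : ℝ → ℝ, ContinuousOn ψ (Icc (0:ℝ) 1) → AEStronglyMeasurable ψ ν)
    (hδ : 0 < δ)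
    (hφc : ContinuousOn φ (Icc (x - δ) (x + δ)))
    (k : ℕ) {u₀ : ℝ} (hu₀ : |u₀| < δ / (1 + |m|)) :
    ContinuousAt (fun u => ∫ t, (t - m) ^ k * φ (x + (t - m) * u) ∂ν) u₀ := by
  set r := δ / (1 + |m|) with hr
  have hrpos : 0 < r := by positivity
  set ε := r - |u₀| with hε
  have hεpos : 0 < ε := by simp [hε]; linarith
  have hball : ∀ u ∈ ball u₀ ε, |u| ≤ r := by
    intro u hu
    have : |u - u₀| < ε := by simpa [Real.dist_eq] using hu
    calc |u| = |u₀ + (u - u₀)| := by ring_nf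
      _ ≤ |u₀| + |u - u₀| := abs_add_le _ _
      _ ≤ r := by linarith
  have hK : IsCompact (Icc (x - δ) (x + δ)) := isCompact_Icc
  obtain ⟨C, hC⟩ := hK.exists_bound_of_continuousOn hφc
  have h1m : (0:ℝ) < 1 + |m| := by positivity
  have habs : ∀ t ∈ Icc (0:ℝ) 1, |t - m| ≤ 1 + |m| := by
    intro t ht
    calc |t - m| ≤ |t| + |m| := abs_sub _ _
      _ ≤ 1 + |m| := by
        have : |t| ≤ 1 := abs_le.2 ⟨by linarith [ht.1], ht.2⟩
        linarith
  refine continuousAt_of_dominated (bound := fun _ => (1 + |m|) ^ k * C) ?_ ?_ ?_ ?_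
  · filter_upwards [Metric.ball_mem_nhds u₀ hεpos] with u hu
    exact (param_integrable hmem hmeas hδ hφc k (hball u hu)).aestronglyMeasurable
  · filter_upwards [Metric.ball_mem_nhds u₀ hεpos] with u hu
    filter_upwards [hmem] with t ht
    rw [Real.norm_eq_abs, abs_mul, abs_pow]
    exact mul_le_mul (pow_le_pow_left₀ (abs_nonneg _) (habs t ht) k)
      (hC _ (arg_mem_Icc hδ ht (hball u hu))) (abs_nonneg _) (by positivity)
  · exact integrable_const _
  · filter_upwards [hmem] with t ht
    have h2 : |(t - m) * u₀| < δ := by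
      rw [abs_mul]
      calc |t - m| * |u₀| ≤ (1 + |m|) * |u₀| :=
          mul_le_mul_of_nonneg_right (habs t ht) (abs_nonneg _)
        _ < (1 + |m|) * r := by
          rcases eq_or_lt_of_le (abs_nonneg u₀) with h | h
          · rw [← h]; simpa using mul_pos h1m hrpos
          · exact (mul_lt_mul_iff_right₀ h1m).2 hu₀
        _ = δ := by rw [hr]; field_simp
    rcases abs_lt.1 h2 with ⟨ha, hb⟩
    have hy : ContinuousAt φ (x + (t - m) * u₀) :=
      hφc.continuousAt (Icc_mem_nhds (by linarith) (by linarith))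
    have hin : ContinuousAt (fun u : ℝ => x + (t - m) * u) u₀ := by fun_prop
    exact continuousAt_const.mul (ContinuousAt.comp hy hin)
end Param

lemma cd2_of_hasDerivAt {F F1 F2 : ℝ → ℝ} {s : Set ℝ} (hs : IsOpen s)
    (h1 : ∀ u ∈ s, HasDerivAt F (F1 u) u) (h2 : ∀ u ∈ s, HasDerivAt F1 (F2 u) u)
    (h3 : ContinuousOn F2 s) : ContDiffOn ℝ 2 F s := by
  have e1 : EqOn (deriv F) F1 s := fun u hu => (h1 u hu).deriv
  have e2 : EqOn (deriv F1) F2 s := fun u hu => (h2 u hu).deriv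
  rw [show (2 : WithTop ℕ∞) = 1 + 1 from rfl, contDiffOn_succ_iff_deriv_of_isOpen hs]
  refine ⟨fun u hu => (h1 u hu).differentiableAt.differentiableWithinAt, by simp, ?_⟩
  refine ContDiffOn.congr ?_ e1
  rw [show (1 : WithTop ℕ∞) = 0 + 1 from rfl, contDiffOn_succ_iff_deriv_of_isOpen hs]
  refine ⟨fun u hu => (h2 u hu).differentiableAt.differentiableWithinAt, by simp, ?_⟩
  rw [contDiffOn_zero]
  exact ContinuousOn.congr h3 e2


/-- The second derivative of `m_x` at the origin. -/
theorem statement11 (I : Set ℝ) (hIopen : IsOpen I) (hIne : I.Nonempty)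
    (hIconn : I.OrdConnected)
    (f g : ℝ → ℝ) (hfg : ClassC 2 I f g)
    (μ : Measure ℝ) [IsProbabilityMeasure μ] (hsupp : μ (Set.Icc (0:ℝ) 1)ᶜ = 0) :
    ∀ x ∈ I,
      ContDiffAt ℝ 2 (mfun I f g μ x) 0 ∧
      mfun I f g μ x 0 = x ∧
      deriv (mfun I f g μ x) 0 = 0 ∧
      iteratedDeriv 2 (mfun I f g μ x) 0 = cmom μ 2 * Phi f g x := by
  intro x hx
  obtain ⟨hf2, hg2, hgpos, hW⟩ := hfg
  have hf2' : ContDiffOn ℝ 2 f I := by exact_mod_cast hf2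
  have hg2' : ContDiffOn ℝ 2 g I := by exact_mod_cast hg2
  set ν : Measure ℝ := μ.restrict (Icc (0:ℝ) 1) with hνdef
  have hν1 : ν univ = 1 := by
    rw [Measure.restrict_apply_univ]
    exact (prob_compl_eq_zero_iff measurableSet_Icc).1 hsupp
  have hmem : ∀ᵐ t ∂ν, t ∈ Icc (0:ℝ) 1 := ae_restrict_mem measurableSet_Icc
  have hmeas : ∀ ψ : ℝ → ℝ, ContinuousOn ψ (Icc (0:ℝ) 1) → AEStronglyMeasurable ψ ν :=
    fun ψ h => h.aestronglyMeasurable measurableSet_Icc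
  set m : ℝ := mom1 μ with hmdef
  -- choose δ
  obtain ⟨ε₀, hε₀, hb₀⟩ := Metric.isOpen_iff.1 hIopen x hx
  set δ : ℝ := ε₀ / 2 with hδdef
  have hδpos : 0 < δ := by positivity
  have hδI : Icc (x - δ) (x + δ) ⊆ I := by
    intro y hy
    apply hb₀
    rw [mem_ball, Real.dist_eq, abs_lt]
    rcases hy with ⟨h1, h2⟩
    constructor <;> simp [hδdef] at * <;> linarith
  -- derivatives of f and g on I
  set f1 : ℝ → ℝ := deriv f with hf1def
  set f2 : ℝ → ℝ := deriv f1 with hf2def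
  set g1 : ℝ → ℝ := deriv g with hg1def
  set g2 : ℝ → ℝ := deriv g1 with hg2def
  have hsplit : ∀ φ : ℝ → ℝ, ContDiffOn ℝ 2 φ I →
      (∀ y ∈ I, HasDerivAt φ (deriv φ y) y) ∧
      (∀ y ∈ I, HasDerivAt (deriv φ) (deriv (deriv φ) y) y) ∧
      ContinuousOn (deriv (deriv φ)) I := by
    intro φ hφ
    rw [show (2 : WithTop ℕ∞) = 1 + 1 from rfl, contDiffOn_succ_iff_deriv_of_isOpen hIopen] at hφ
    obtain ⟨hdiff, -, hφ1⟩ := hφ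
    have hφ1' := hφ1
    rw [show (1 : WithTop ℕ∞) = 0 + 1 from rfl, contDiffOn_succ_iff_deriv_of_isOpen hIopen] at hφ1'
    obtain ⟨hdiff1, -, hφ2⟩ := hφ1'
    rw [contDiffOn_zero] at hφ2
    exact ⟨fun y hy => ((hdiff y hy).differentiableAt (hIopen.mem_nhds hy)).hasDerivAt,
      fun y hy => ((hdiff1 y hy).differentiableAt (hIopen.mem_nhds hy)).hasDerivAt, hφ2⟩
  obtain ⟨hdf, hdf1, hf2c⟩ := hsplit f hf2'
  obtain ⟨hdg, hdg1, hg2c⟩ := hsplit g hg2'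
  have hf1c : ContinuousOn f1 I := fun y hy => (hdf1 y hy).continuousAt.continuousWithinAt
  have hg1c : ContinuousOn g1 I := fun y hy => (hdg1 y hy).continuousAt.continuousWithinAt
  have hfc : ContinuousOn f I := fun y hy => (hdf y hy).continuousAt.continuousWithinAt
  have hgc : ContinuousOn g I := fun y hy => (hdg y hy).continuousAt.continuousWithinAt
  -- the parametric integrals
  set r : ℝ := δ / (1 + |m|) with hrdef
  have hrpos : 0 < r := by positivity
  set B : Set ℝ := ball (0:ℝ) r with hBdef
  have h0B : (0:ℝ) ∈ B := mem_ball_self hrpos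
  have hBabs : ∀ u ∈ B, |u| < r := by
    intro u hu; simpa [hBdef, Real.dist_eq] using hu
  set Ff : ℝ → ℝ := fun u => ∫ t, (t - m) ^ 0 * f (x + (t - m) * u) ∂ν with hFfdef
  set F1f : ℝ → ℝ := fun u => ∫ t, (t - m) ^ 1 * f1 (x + (t - m) * u) ∂ν with hF1fdef
  set F2f : ℝ → ℝ := fun u => ∫ t, (t - m) ^ 2 * f2 (x + (t - m) * u) ∂ν with hF2fdef
  set Fg : ℝ → ℝ := fun u => ∫ t, (t - m) ^ 0 * g (x + (t - m) * u) ∂ν with hFgdef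
  set F1g : ℝ → ℝ := fun u => ∫ t, (t - m) ^ 1 * g1 (x + (t - m) * u) ∂ν with hF1gdef
  set F2g : ℝ → ℝ := fun u => ∫ t, (t - m) ^ 2 * g2 (x + (t - m) * u) ∂ν with hF2gdef
  have hFfd : ∀ u ∈ B, HasDerivAt Ff (F1f u) u := fun u hu =>
    param_hasDerivAt hmem hmeas hδpos (fun y hy => hdf y (hδI hy)) (hf1c.mono hδI) 0 (hBabs u hu)
  have hF1fd : ∀ u ∈ B, HasDerivAt F1f (F2f u) u := fun u hu =>
    param_hasDerivAt hmem hmeas hδpos (fun y hy => hdf1 y (hδI hy)) (hf2c.mono hδI) 1 (hBabs u hu)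
  have hF2fc : ContinuousOn F2f B := fun u hu =>
    (param_continuousAt hmem hmeas hδpos (hf2c.mono hδI) 2 (hBabs u hu)).continuousWithinAt
  have hFgd : ∀ u ∈ B, HasDerivAt Fg (F1g u) u := fun u hu =>
    param_hasDerivAt hmem hmeas hδpos (fun y hy => hdg y (hδI hy)) (hg1c.mono hδI) 0 (hBabs u hu)
  have hF1gd : ∀ u ∈ B, HasDerivAt F1g (F2g u) u := fun u hu =>
    param_hasDerivAt hmem hmeas hδpos (fun y hy => hdg1 y (hδI hy)) (hg2c.mono hδI) 1 (hBabs u hu)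
  have hF2gc : ContinuousOn F2g B := fun u hu =>
    (param_continuousAt hmem hmeas hδpos (hg2c.mono hδI) 2 (hBabs u hu)).continuousWithinAt
  have hFfcd : ContDiffOn ℝ 2 Ff B := cd2_of_hasDerivAt isOpen_ball hFfd hF1fd hF2fc
  have hFgcd : ContDiffOn ℝ 2 Fg B := cd2_of_hasDerivAt isOpen_ball hFgd hF1gd hF2gc
  -- positivity of Fg
  have hgxpos := hgpos x hx
  obtain ⟨c, hcpos, hcle⟩ : ∃ c > 0, ∀ y ∈ Icc (x - δ) (x + δ), c ≤ g y := by
    obtain ⟨y₀, hy₀, hmin⟩ := isCompact_Icc.exists_isMinOn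
      (nonempty_Icc.2 (by linarith)) (hgc.mono hδI)
    exact ⟨g y₀, hgpos y₀ (hδI hy₀), fun y hy => hmin hy⟩
  have hFgpos : ∀ u ∈ B, 0 < Fg u := by
    intro u hu
    have hint : Integrable (fun t => (t - m) ^ 0 * g (x + (t - m) * u)) ν :=
      param_integrable hmem hmeas hδpos (hgc.mono hδI) 0 (hBabs u hu).le
    have hle : ∫ t, c ∂ν ≤ Fg u := by
      refine integral_mono_ae (integrable_const c) hint ?_
      filter_upwards [hmem] with t ht
      simpa using hcle _ (arg_mem_Icc hδpos ht (hBabs u hu).le)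
    have : ∫ t, c ∂ν = c := by simp [integral_const, hν1, Measure.real]
    linarith [this ▸ hle]
  -- values at 0
  have hval : ∀ (φ : ℝ → ℝ) (k : ℕ),
      (∫ t, (t - m) ^ k * φ (x + (t - m) * 0) ∂ν) = (∫ t, (t - m) ^ k ∂ν) * φ x := by
    intro φ k
    simp_rw [mul_zero, add_zero]
    exact integral_mul_const _ _
  have hmom0 : (∫ t, (t - m) ^ 0 ∂ν) = 1 := by simp [integral_const, hν1, Measure.real]
  have htint : Integrable (fun t : ℝ => t) ν := by
    refine Integrable.mono' (integrable_const 1) (hmeas _ continuous_id.continuousOn) ?_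
    filter_upwards [hmem] with t ht
    rw [Real.norm_eq_abs]; exact abs_le.2 ⟨by linarith [ht.1], ht.2⟩
  have hmom1 : (∫ t, (t - m) ^ 1 ∂ν) = 0 := by
    simp_rw [pow_one]
    rw [integral_sub htint (integrable_const m)]
    have h1 : (∫ t : ℝ, t ∂ν) = m := rfl
    have h2 : (∫ _ : ℝ, m ∂ν) = m := by simp [integral_const, hν1, Measure.real]
    rw [h1, h2, sub_self]
  have hmom2 : (∫ t, (t - m) ^ 2 ∂ν) = cmom μ 2 := rfl
  have hFf0 : Ff 0 = f x := by rw [hFfdef]; simp only []; rw [hval f 0, hmom0, one_mul]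
  have hFg0 : Fg 0 = g x := by rw [hFgdef]; simp only []; rw [hval g 0, hmom0, one_mul]
  have hF1f0 : F1f 0 = 0 := by rw [hF1fdef]; simp only []; rw [hval f1 1, hmom1, zero_mul]
  have hF1g0 : F1g 0 = 0 := by rw [hF1gdef]; simp only []; rw [hval g1 1, hmom1, zero_mul]
  have hF2f0 : F2f 0 = cmom μ 2 * f2 x := by
    rw [hF2fdef]; simp only []; rw [hval f2 2, hmom2]
  have hF2g0 : F2g 0 = cmom μ 2 * g2 x := by
    rw [hF2gdef]; simp only []; rw [hval g2 2, hmom2]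
  -- N
  set N : ℝ → ℝ := fun u => Ff u / Fg u with hNdef
  have hNcd : ContDiffOn ℝ 2 N B := hFfcd.div hFgcd (fun u hu => (hFgpos u hu).ne')
  have hNat : ContDiffAt ℝ 2 N 0 := hNcd.contDiffAt (isOpen_ball.mem_nhds h0B)
  have hgxne : g x ≠ 0 := hgxpos.ne'
  have hN0 : N 0 = f x / g x := by rw [hNdef]; simp only []; rw [hFf0, hFg0]
  set D : ℝ → ℝ := fun u => (F1f u * Fg u - Ff u * F1g u) / Fg u ^ 2 with hDdef
  have hND : ∀ u ∈ B, HasDerivAt N (D u) u := fun u hu =>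
    (hFfd u hu).div (hFgd u hu) (hFgpos u hu).ne'
  have hD0 : D 0 = 0 := by
    rw [hDdef]; simp only []; rw [hF1f0, hF1g0, hFf0, hFg0]; ring
  have hderivN : deriv N 0 = 0 := by rw [(hND 0 h0B).deriv, hD0]
  have hevD : deriv N =ᶠ[𝓝 0] D :=
    eventually_of_mem (isOpen_ball.mem_nhds h0B) (fun u hu => (hND u hu).deriv)
  -- h and its inverse
  set h : ℝ → ℝ := fun y => f y / g y with hhdef
  have hfat : ContDiffAt ℝ 2 f x := hf2'.contDiffAt (hIopen.mem_nhds hx)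
  have hgat : ContDiffAt ℝ 2 g x := hg2'.contDiffAt (hIopen.mem_nhds hx)
  have hcdh : ContDiffAt ℝ 2 h x := hfat.div hgat hgxne
  set h' : ℝ → ℝ := fun y => (f1 y * g y - f y * g1 y) / g y ^ 2 with hh'def
  have hdh : ∀ y ∈ I, HasDerivAt h (h' y) y := fun y hy =>
    (hdf y hy).div (hdg y hy) (hgpos y hy).ne'
  have hWeq : ∀ y, Wr 1 0 f g y = f1 y * g y - f y * g1 y := by
    intro y; simp [Wr, iteratedDeriv_one, iteratedDeriv_zero, hf1def, hg1def]
  have hne : ∀ y ∈ I, h' y ≠ 0 := by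
    intro y hy
    rw [hh'def]
    exact div_ne_zero (by rw [← hWeq]; exact hW y hy) (pow_ne_zero _ (hgpos y hy).ne')
  have hnex : h' x ≠ 0 := hne x hx
  have hdhx : HasDerivAt h (h' x) x := hdh x hx
  have hfd := hdhx.hasFDerivAt_equiv hnex
  have hle : (2 : WithTop ℕ∞) ≠ 0 := by simp
  set L : ℝ → ℝ := hcdh.localInverse hfd hle with hLdef
  have hsf : HasStrictFDerivAt h
      (↑(ContinuousLinearEquiv.unitsEquivAut ℝ (Units.mk0 (h' x) hnex)) : ℝ →L[ℝ] ℝ) x :=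
    hcdh.hasStrictFDerivAt' hfd hle
  have hL0 : L (h x) = x := hcdh.localInverse_apply_image hfd hle
  have hLsm : ContDiffAt ℝ 2 L (h x) := hcdh.to_localInverse hfd hle
  have hLright : ∀ᶠ y in 𝓝 (h x), h (L y) = y := hsf.eventually_right_inverse
  have hLc : ContinuousAt L (h x) := hsf.localInverse_continuousAt
  have hstr : HasStrictDerivAt h (h' x) x := hcdh.hasStrictDerivAt' hdhx hle
  have hLd : HasStrictDerivAt L (h' x)⁻¹ (h x) :=
    HasStrictDerivAt.of_local_left_inverse hLc (hL0.symm ▸ hstr) hnex hLright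
  -- injectivity of h on I
  have hhc : ContinuousOn h I := hfc.div hgc (fun y hy => (hgpos y hy).ne')
  have hkey : ∀ a b, a ∈ I → b ∈ I → a < b → h a ≠ h b := by
    intro a b ha hb hlt heq2
    have hsub : Icc a b ⊆ I := hIconn.out ha hb
    obtain ⟨cc, hcc, hcc0⟩ := exists_hasDerivAt_eq_zero hlt (hhc.mono hsub) heq2
      (fun y hy => hdh y (hsub (Ioo_subset_Icc_self hy)))
    exact hne cc (hsub (Ioo_subset_Icc_self hcc)) hcc0
  have hinj : InjOn h I := by
    intro a ha b hb heq2
    rcases lt_trichotomy a b with hlt | he | hlt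
    · exact absurd heq2 (hkey a b ha hb hlt)
    · exact he
    · exact absurd heq2.symm (hkey b a hb ha hlt)
  -- eventual equality of mfun with L ∘ N
  have hNc : ContinuousAt N 0 := hNat.continuousAt
  have hNtend : Tendsto N (𝓝 0) (𝓝 (h x)) := by
    have := hNc; rw [ContinuousAt, hN0] at this; exact this
  have hev1 : ∀ᶠ u in 𝓝 (0:ℝ), h (L (N u)) = N u := hNtend.eventually hLright
  have hLNtend : Tendsto (fun u => L (N u)) (𝓝 0) (𝓝 x) := by
    have := hLc.tendsto.comp hNtend
    rwa [hL0] at this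
  have hev2 : ∀ᶠ u in 𝓝 (0:ℝ), L (N u) ∈ I := hLNtend.eventually (hIopen.mem_nhds hx)
  have heqv : mfun I f g μ x =ᶠ[𝓝 0] fun u => L (N u) := by
    filter_upwards [hev1, hev2] with u hu1 hu2
    have harg : ∀ t : ℝ, t * (x + (1 - mom1 μ) * u) + (1 - t) * (x - mom1 μ * u)
        = x + (t - m) * u := by intro t; rw [hmdef]; ring
    have hif : (∫ t in Icc (0:ℝ) 1, f (t * (x + (1 - mom1 μ) * u) + (1 - t) * (x - mom1 μ * u)) ∂μ)
        = Ff u := by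
      rw [hFfdef]; simp only []
      refine integral_congr_ae (Eventually.of_forall fun t => ?_)
      simp only [harg, pow_zero, one_mul]
    have hig : (∫ t in Icc (0:ℝ) 1, g (t * (x + (1 - mom1 μ) * u) + (1 - t) * (x - mom1 μ * u)) ∂μ)
        = Fg u := by
      rw [hFgdef]; simp only []
      refine integral_congr_ae (Eventually.of_forall fun t => ?_)
      simp only [harg, pow_zero, one_mul]
    show Mmean I f g μ (x + (1 - mom1 μ) * u) (x - mom1 μ * u) = L (N u)
    rw [Mmean, hif, hig]
    have hex : ∃ a ∈ I, (fun t => f t / g t) a = N u := ⟨L (N u), hu2, hu1⟩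
    exact hinj (Function.invFunOn_mem hex) hu2 ((Function.invFunOn_eq hex).trans hu1.symm)
  -- conclusion 1
  have hLsm' : ContDiffAt ℝ 2 L (N 0) := by rw [hN0]; exact hLsm
  have hcomp : ContDiffAt ℝ 2 (fun u => L (N u)) 0 := ContDiffAt.comp 0 hLsm' hNat
  have hG1 : ContDiffAt ℝ 2 (mfun I f g μ x) 0 := hcomp.congr_of_eventuallyEq heqv
  -- conclusion 2
  have hG2 : mfun I f g μ x 0 = x := by
    rw [heqv.eq_of_nhds]
    show L (N 0) = x
    rw [hN0]
    exact hL0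
  -- conclusion 3
  have hLdAt : HasDerivAt L (h' x)⁻¹ (N 0) := by rw [hN0]; exact hLd.hasDerivAt
  have hNd0 : HasDerivAt N (D 0) 0 := hND 0 h0B
  have hder : HasDerivAt (fun u => L (N u)) ((h' x)⁻¹ * D 0) 0 := hLdAt.comp 0 hNd0
  have hG3 : deriv (mfun I f g μ x) 0 = 0 := by
    rw [heqv.deriv_eq, hder.deriv, hD0, mul_zero]
  -- conclusion 4
  have hLev : ∀ᶠ y in 𝓝 (h x), ContDiffAt ℝ 2 L y := hLsm.eventually (by simp)
  have hdL2 : DifferentiableAt ℝ (deriv L) (h x) := by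
    obtain ⟨s, hss, hsopen, hsmem⟩ := _root_.mem_nhds_iff.1 hLev
    have hLs : ContDiffOn ℝ 2 L s := fun y hy => (show ContDiffAt ℝ 2 L y from hss hy).contDiffWithinAt
    rw [show (2 : WithTop ℕ∞) = 1 + 1 from rfl,
      contDiffOn_succ_iff_deriv_of_isOpen hsopen] at hLs
    exact (hLs.2.2.contDiffAt (hsopen.mem_nhds hsmem)).differentiableAt one_ne_zero
  have hdLdAt : HasDerivAt (deriv L) (deriv (deriv L) (h x)) (h x) := hdL2.hasDerivAt
  have hdLN : HasDerivAt (fun u => deriv L (N u)) (deriv (deriv L) (h x) * D 0) 0 := by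
    have h1 : HasDerivAt (deriv L) (deriv (deriv L) (h x)) (N 0) := by
      rw [hN0]; exact hdLdAt
    exact h1.comp 0 hNd0
  have hnum : HasDerivAt (fun u => F1f u * Fg u - Ff u * F1g u)
      (F2f 0 * Fg 0 + F1f 0 * F1g 0 - (F1f 0 * F1g 0 + Ff 0 * F2g 0)) 0 :=
    ((hF1fd 0 h0B).mul (hFgd 0 h0B)).sub ((hFfd 0 h0B).mul (hF1gd 0 h0B))
  have hden : HasDerivAt (fun u => Fg u ^ 2) (((2:ℕ):ℝ) * Fg 0 ^ (2-1) * F1g 0) 0 :=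
    (hFgd 0 h0B).pow 2
  have hDd : HasDerivAt D
      (((F2f 0 * Fg 0 + F1f 0 * F1g 0 - (F1f 0 * F1g 0 + Ff 0 * F2g 0)) * Fg 0 ^ 2 -
        (F1f 0 * Fg 0 - Ff 0 * F1g 0) * (((2:ℕ):ℝ) * Fg 0 ^ (2-1) * F1g 0)) / (Fg 0 ^ 2) ^ 2) 0 :=
    hnum.div hden (pow_ne_zero _ (hFgpos 0 h0B).ne')
  have hdDN : HasDerivAt (deriv N)
      (((F2f 0 * Fg 0 + F1f 0 * F1g 0 - (F1f 0 * F1g 0 + Ff 0 * F2g 0)) * Fg 0 ^ 2 -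
        (F1f 0 * Fg 0 - Ff 0 * F1g 0) * (((2:ℕ):ℝ) * Fg 0 ^ (2-1) * F1g 0)) / (Fg 0 ^ 2) ^ 2) 0 :=
    hDd.congr_of_eventuallyEq hevD
  have hprod : HasDerivAt (fun u => deriv L (N u) * deriv N u)
      ((deriv (deriv L) (h x) * D 0) * deriv N 0 + deriv L (N 0) *
        (((F2f 0 * Fg 0 + F1f 0 * F1g 0 - (F1f 0 * F1g 0 + Ff 0 * F2g 0)) * Fg 0 ^ 2 -
          (F1f 0 * Fg 0 - Ff 0 * F1g 0) * (((2:ℕ):ℝ) * Fg 0 ^ (2-1) * F1g 0)) / (Fg 0 ^ 2) ^ 2)) 0 :=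
    hdLN.mul hdDN
  have hevL : ∀ᶠ y in 𝓝 (h x), DifferentiableAt ℝ L y :=
    hLev.mono fun y hy => hy.differentiableAt two_ne_zero
  have hevN : ∀ᶠ u in 𝓝 (0:ℝ), DifferentiableAt ℝ N u :=
    eventually_of_mem (isOpen_ball.mem_nhds h0B) (fun u hu => (hND u hu).differentiableAt)
  have hcompev : deriv (fun u => L (N u)) =ᶠ[𝓝 0] fun u => deriv L (N u) * deriv N u := by
    filter_upwards [hNtend.eventually hevL, hevN] with u h1 h2
    exact deriv_comp u h1 h2
  have hfinal : deriv (deriv (mfun I f g μ x)) 0 =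
      (deriv (deriv L) (h x) * D 0) * deriv N 0 + deriv L (N 0) *
        (((F2f 0 * Fg 0 + F1f 0 * F1g 0 - (F1f 0 * F1g 0 + Ff 0 * F2g 0)) * Fg 0 ^ 2 -
          (F1f 0 * Fg 0 - Ff 0 * F1g 0) * (((2:ℕ):ℝ) * Fg 0 ^ (2-1) * F1g 0)) / (Fg 0 ^ 2) ^ 2) := by
    have e1 : deriv (mfun I f g μ x) =ᶠ[𝓝 0] deriv (fun u => L (N u)) := heqv.deriv
    have e2 : deriv (mfun I f g μ x) =ᶠ[𝓝 0] fun u => deriv L (N u) * deriv N u :=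
      e1.trans hcompev
    rw [e2.deriv_eq]
    exact hprod.deriv
  have hW20 : Wr 2 0 f g x = f2 x * g x - f x * g2 x := by
    simp [Wr, iteratedDeriv_succ, iteratedDeriv_one, iteratedDeriv_zero, hf2def, hf1def,
      hg2def, hg1def]
  have hWne : f1 x * g x - f x * g1 x ≠ 0 := by rw [← hWeq]; exact hW x hx
  have hG4 : iteratedDeriv 2 (mfun I f g μ x) 0 = cmom μ 2 * Phi f g x := by
    rw [iteratedDeriv_succ, iteratedDeriv_one, hfinal, hD0, hderivN, hLdAt.deriv]
    rw [hF2f0, hF2g0, hFf0, hFg0, hF1f0, hF1g0]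
    rw [Phi, hW20, hWeq x, hh'def]
    simp only []
    push_cast
    field_simp
    ring
  exact ⟨hG1, hG2, hG3, hG4⟩

end Aux
end

section
/- Let (f,g) ∈ C_3(I) and let μ be a Borel probability measure on [0,1]. Then for every fixed x ∈ I, the function m_x := m_{x;f,g;μ} is three times continuously differentiable in a neighborhood of 0 and its third derivative at 0 satisfies m_x'''(0) = μ₃·(Φ'_{f,g} + Φ²_{f,g} + Ψ_{f,g})(x). -/
open MeasureTheory Set Filter Metric Topology

/-- Sign constancy of a nonvanishing continuous function on an ord-connected set. -/
lemma signConst {I : Set ℝ} (hI : I.OrdConnected) {w : ℝ → ℝ} (hw : ContinuousOn w I)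
    (h0 : ∀ y ∈ I, w y ≠ 0) {a : ℝ} (ha : a ∈ I) (hapos : 0 < w a) :
    ∀ y ∈ I, 0 < w y := by
  intro y hy
  rcases lt_or_gt_of_ne (h0 y hy) with hneg | hpos
  · exfalso
    have hsub : uIcc y a ⊆ I := hI.uIcc_subset hy ha
    have := intermediate_value_uIcc (hw.mono hsub)
    have h0mem : (0:ℝ) ∈ uIcc (w y) (w a) := by
      rw [Set.mem_uIcc]; left; exact ⟨hneg.le, hapos.le⟩
    obtain ⟨z, hz, hwz⟩ := this h0mem
    exact h0 z (hsub hz) hwz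
  · exact hpos

/-- Step-down of smoothness on an open set. -/
lemma stepdown {n : ℕ} {f : ℝ → ℝ} {s : Set ℝ} (hs : IsOpen s)
    (hf : ContDiffOn ℝ (n+1 : ℕ) f s) :
    (∀ y ∈ s, HasDerivAt f (deriv f y) y) ∧ ContDiffOn ℝ (n : ℕ) (deriv f) s := by
  have h : ContDiffOn ℝ ((n : WithTop ℕ∞) + 1) f s := by
    exact_mod_cast hf
  rw [contDiffOn_succ_iff_deriv_of_isOpen hs] at h
  exact ⟨fun y hy => ((h.1 y hy).differentiableAt (hs.mem_nhds hy)).hasDerivAt, h.2.2⟩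

/-- Unpack a `C³` function on an open set into a chain of derivatives. -/
lemma unpack3 {f : ℝ → ℝ} {s : Set ℝ} (hs : IsOpen s) (hf : ContDiffOn ℝ 3 f s) :
    (∀ y ∈ s, HasDerivAt f (deriv f y) y) ∧
    (∀ y ∈ s, HasDerivAt (deriv f) (deriv (deriv f) y) y) ∧
    (∀ y ∈ s, HasDerivAt (deriv (deriv f)) (deriv (deriv (deriv f)) y) y) ∧
    ContinuousOn (deriv (deriv (deriv f))) s := by
  have hf' : ContDiffOn ℝ (2+1 : ℕ) f s := by exact_mod_cast hf
  obtain ⟨h0, h1⟩ := stepdown hs hf'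
  obtain ⟨h1', h2⟩ := stepdown hs (show ContDiffOn ℝ (1+1:ℕ) (deriv f) s from h1)
  obtain ⟨h2', h3⟩ := stepdown hs (show ContDiffOn ℝ (0+1:ℕ) (deriv (deriv f)) s from h2)
  exact ⟨h0, h1', h2', by simpa [contDiffOn_zero] using h3⟩

/-- Build `C³` from a chain of derivatives on an open set. -/
lemma pack3 {n0 n1 n2 n3 : ℝ → ℝ} {s : Set ℝ} (hs : IsOpen s)
    (h0 : ∀ u ∈ s, HasDerivAt n0 (n1 u) u) (h1 : ∀ u ∈ s, HasDerivAt n1 (n2 u) u)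
    (h2 : ∀ u ∈ s, HasDerivAt n2 (n3 u) u) (h3 : ContinuousOn n3 s) :
    ContDiffOn ℝ 3 n0 s := by
  have e2 : EqOn (deriv n2) n3 s := fun u hu => (h2 u hu).deriv
  have e1 : EqOn (deriv n1) n2 s := fun u hu => (h1 u hu).deriv
  have e0 : EqOn (deriv n0) n1 s := fun u hu => (h0 u hu).deriv
  have c2 : ContDiffOn ℝ (0+1:ℕ) n2 s := by
    rw [show ((0+1:ℕ) : WithTop ℕ∞) = (0 : WithTop ℕ∞) + 1 by norm_cast,
      contDiffOn_succ_iff_deriv_of_isOpen hs]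
    refine ⟨fun u hu => ((h2 u hu).differentiableAt).differentiableWithinAt, ?_, ?_⟩
    · intro h; simp at h
    · rw [contDiffOn_zero]; exact (h3.congr e2)
  have c1 : ContDiffOn ℝ (1+1:ℕ) n1 s := by
    rw [show ((1+1:ℕ) : WithTop ℕ∞) = ((1:ℕ) : WithTop ℕ∞) + 1 by norm_cast,
      contDiffOn_succ_iff_deriv_of_isOpen hs]
    refine ⟨fun u hu => ((h1 u hu).differentiableAt).differentiableWithinAt, ?_, ?_⟩
    · intro h; simp at h
    · exact (by exact_mod_cast c2 : ContDiffOn ℝ ((1:ℕ) : WithTop ℕ∞) n2 s).congr e1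
  have c0 : ContDiffOn ℝ (2+1:ℕ) n0 s := by
    rw [show ((2+1:ℕ) : WithTop ℕ∞) = ((2:ℕ) : WithTop ℕ∞) + 1 by norm_cast,
      contDiffOn_succ_iff_deriv_of_isOpen hs]
    refine ⟨fun u hu => ((h0 u hu).differentiableAt).differentiableWithinAt, ?_, ?_⟩
    · intro h; simp at h
    · exact (by exact_mod_cast c1 : ContDiffOn ℝ ((2:ℕ) : WithTop ℕ∞) n1 s).congr e0
  exact_mod_cast c0

/-- Eventually-equal functions have equal iterated derivatives. -/
lemma evIteratedDeriv : ∀ (n : ℕ) {f g : ℝ → ℝ}, f =ᶠ[𝓝 (0:ℝ)] g →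
    iteratedDeriv n f =ᶠ[𝓝 (0:ℝ)] iteratedDeriv n g := by
  intro n
  induction n with
  | zero => intro f g h; simpa [iteratedDeriv_zero] using h
  | succ n ih =>
    intro f g h
    rw [iteratedDeriv_succ', iteratedDeriv_succ']
    exact ih h.deriv

lemma mapsToAux {c δ x u : ℝ} (habs : ∀ t ∈ Icc (0:ℝ) 1, |t - c| ≤ 1)
    (hu : |u| ≤ δ) : ∀ t ∈ Icc (0:ℝ) 1, x + (t - c) * u ∈ Icc (x-δ) (x+δ) := by
  intro t ht
  have h1 : |(t - c) * u| ≤ δ := by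
    rw [abs_mul]
    calc |t - c| * |u| ≤ 1 * δ := by
          exact mul_le_mul (habs t ht) hu (abs_nonneg u) zero_le_one
      _ = δ := one_mul δ
  rw [abs_le] at h1
  constructor <;> linarith [h1.1, h1.2]

lemma measAux (μ : Measure ℝ) {c δ x u : ℝ} (hu : |u| ≤ δ) {F : ℝ → ℝ}
    (hFc : ContinuousOn F (Icc (x-δ) (x+δ)))
    (habs : ∀ t ∈ Icc (0:ℝ) 1, |t - c| ≤ 1) (k : ℕ) :
    AEStronglyMeasurable (fun t => F (x + (t - c) * u) * (t - c)^k)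
      (μ.restrict (Icc (0:ℝ) 1)) := by
  apply ContinuousOn.aestronglyMeasurable _ measurableSet_Icc
  apply ContinuousOn.mul
  · exact hFc.comp ((continuous_const.add (((continuous_id.sub continuous_const).mul
      continuous_const))).continuousOn) (mapsToAux habs hu)
  · fun_prop

lemma boundAux {μ : Measure ℝ} [IsFiniteMeasure μ] {c δ x u C : ℝ} (hu : |u| ≤ δ)
    {F : ℝ → ℝ} (hC : ∀ y ∈ Icc (x-δ) (x+δ), ‖F y‖ ≤ C)
    (habs : ∀ t ∈ Icc (0:ℝ) 1, |t - c| ≤ 1) (k : ℕ) :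
    ∀ᵐ t ∂(μ.restrict (Icc (0:ℝ) 1)), ‖F (x + (t - c) * u) * (t - c)^k‖ ≤ C := by
  filter_upwards [ae_restrict_mem measurableSet_Icc] with t ht
  rw [norm_mul]
  have h1 : ‖F (x + (t - c) * u)‖ ≤ C := hC _ (mapsToAux habs hu t ht)
  have h2 : ‖(t - c)^k‖ ≤ 1 := by
    rw [norm_pow]
    apply pow_le_one₀ (norm_nonneg _)
    simpa [Real.norm_eq_abs] using habs t ht
  calc ‖F (x + (t - c) * u)‖ * ‖(t - c)^k‖ ≤ C * 1 := by
        apply mul_le_mul h1 h2 (norm_nonneg _) ((norm_nonneg _).trans h1)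
    _ = C := mul_one C

lemma intDeriv (μ : Measure ℝ) [IsFiniteMeasure μ]
    {c δ x : ℝ} (hδ : 0 < δ) (habs : ∀ t ∈ Icc (0:ℝ) 1, |t - c| ≤ 1)
    {F F' : ℝ → ℝ}
    (hF : ∀ y ∈ Icc (x-δ) (x+δ), HasDerivAt F (F' y) y)
    (hFc : ContinuousOn F (Icc (x-δ) (x+δ)))
    (hF'c : ContinuousOn F' (Icc (x-δ) (x+δ)))
    (k : ℕ) {u₀ : ℝ} (hu₀ : |u₀| < δ) :
    HasDerivAt (fun u => ∫ t in Icc (0:ℝ) 1, F (x + (t - c) * u) * (t - c)^k ∂μ)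
      (∫ t in Icc (0:ℝ) 1, F' (x + (t - c) * u₀) * (t - c)^(k+1) ∂μ) u₀ := by
  obtain ⟨C₀, hC₀⟩ := (isCompact_Icc (a := x-δ) (b := x+δ)).exists_bound_of_continuousOn hFc
  obtain ⟨C₁, hC₁⟩ := (isCompact_Icc (a := x-δ) (b := x+δ)).exists_bound_of_continuousOn hF'c
  have hε : (0:ℝ) < δ - |u₀| := by linarith
  have hball : ∀ u ∈ ball u₀ (δ - |u₀|), |u| ≤ δ := by
    intro u hu
    rw [mem_ball, Real.dist_eq] at hu
    calc |u| = |u₀ + (u - u₀)| := by ring_nf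
      _ ≤ |u₀| + |u - u₀| := abs_add_le _ _
      _ ≤ δ := by linarith
  have key := hasDerivAt_integral_of_dominated_loc_of_deriv_le
    (μ := μ.restrict (Icc (0:ℝ) 1)) (x₀ := u₀) (s := ball u₀ (δ - |u₀|))
    (F := fun u t => F (x + (t - c) * u) * (t - c)^k)
    (F' := fun u t => F' (x + (t - c) * u) * (t - c)^(k+1))
    (bound := fun _ => C₁) (ball_mem_nhds u₀ hε) ?_ ?_ ?_ ?_ ?_ ?_
  · exact key.2
  · filter_upwards [ball_mem_nhds u₀ hε] with u hu
    exact measAux μ (hball u hu) hFc habs k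
  · apply Integrable.mono' (integrable_const C₀)
      (measAux μ (le_of_lt hu₀) hFc habs k)
    exact boundAux (le_of_lt hu₀) hC₀ habs k
  · exact measAux μ (le_of_lt hu₀) hF'c habs (k+1)
  · filter_upwards [ae_restrict_mem measurableSet_Icc] with t ht u hu
    have h1 : ‖F' (x + (t - c) * u)‖ ≤ C₁ := hC₁ _ (mapsToAux habs (hball u hu) t ht)
    rw [norm_mul]
    have h2 : ‖(t - c)^(k+1)‖ ≤ 1 := by
      rw [norm_pow]
      apply pow_le_one₀ (norm_nonneg _)
      simpa [Real.norm_eq_abs] using habs t ht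
    calc ‖F' (x + (t - c) * u)‖ * ‖(t - c)^(k+1)‖ ≤ C₁ * 1 := by
          apply mul_le_mul h1 h2 (norm_nonneg _) ((norm_nonneg _).trans h1)
      _ = C₁ := mul_one C₁
  · exact integrable_const C₁
  · filter_upwards [ae_restrict_mem measurableSet_Icc] with t ht u hu
    have hpt : x + (t - c) * u ∈ Icc (x-δ) (x+δ) := mapsToAux habs (hball u hu) t ht
    have hin : HasDerivAt (fun u : ℝ => x + (t - c) * u) (t - c) u := by
      simpa using (hasDerivAt_id u).const_mul (t - c) |>.const_add x
    have := ((hF _ hpt).comp u hin).mul_const ((t - c)^k)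
    have h2 : HasDerivAt (fun u => F (x + (t - c) * u) * (t - c)^k)
        (F' (x + (t - c) * u) * (t - c)^(k+1)) u := by
      rw [show F' (x + (t - c) * u) * (t - c)^(k+1) = F' (x + (t - c) * u) * (t - c) * (t - c)^k by ring]
      exact this
    exact h2
lemma intCont (μ : Measure ℝ) [IsFiniteMeasure μ]
    {c δ x : ℝ} (hδ : 0 < δ) (habs : ∀ t ∈ Icc (0:ℝ) 1, |t - c| ≤ 1)
    {F : ℝ → ℝ}
    (hFc : ContinuousOn F (Icc (x-δ) (x+δ)))
    (k : ℕ) {u₀ : ℝ} (hu₀ : |u₀| < δ) :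
    ContinuousAt (fun u => ∫ t in Icc (0:ℝ) 1, F (x + (t - c) * u) * (t - c)^k ∂μ) u₀ := by
  obtain ⟨C₀, hC₀⟩ := (isCompact_Icc (a := x-δ) (b := x+δ)).exists_bound_of_continuousOn hFc
  have hε : (0:ℝ) < δ - |u₀| := by linarith
  have hball : ∀ u ∈ ball u₀ (δ - |u₀|), |u| ≤ δ := by
    intro u hu
    rw [mem_ball, Real.dist_eq] at hu
    calc |u| = |u₀ + (u - u₀)| := by ring_nf
      _ ≤ |u₀| + |u - u₀| := abs_add_le _ _
      _ ≤ δ := by linarith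
  apply continuousAt_of_dominated (bound := fun _ => C₀)
  · filter_upwards [ball_mem_nhds u₀ hε] with u hu
    exact measAux μ (hball u hu) hFc habs k
  · filter_upwards [ball_mem_nhds u₀ hε] with u hu
    exact boundAux (hball u hu) hC₀ habs k
  · exact integrable_const C₀
  · filter_upwards [ae_restrict_mem measurableSet_Icc] with t ht
    have hpt : x + (t - c) * u₀ ∈ Ioo (x-δ) (x+δ) := by
      have h1 : |(t - c) * u₀| < δ := by
        rw [abs_mul]
        calc |t - c| * |u₀| ≤ 1 * |u₀| :=
              mul_le_mul_of_nonneg_right (habs t ht) (abs_nonneg _)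
          _ = |u₀| := one_mul _
          _ < δ := hu₀
      rw [abs_lt] at h1
      constructor <;> linarith [h1.1, h1.2]
    have hFat : ContinuousAt F (x + (t - c) * u₀) :=
      hFc.continuousAt (Icc_mem_nhds hpt.1 hpt.2)
    have hin : Continuous (fun u : ℝ => x + (t - c) * u) := by fun_prop
    exact (ContinuousAt.comp (g := F) (f := fun u : ℝ => x + (t - c) * u) hFat hin.continuousAt).mul continuousAt_const

/-- Third derivative of a composition at a critical point of the inner map. -/
lemma comp3 {φ r : ℝ → ℝ} {u₀ : ℝ} {V W : Set ℝ}
    (hV : IsOpen V) (hrV : r u₀ ∈ V) (hφ : ContDiffOn ℝ 3 φ V)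
    (hW : IsOpen W) (hu₀ : u₀ ∈ W) (hr : ContDiffOn ℝ 3 r W)
    (hr' : deriv r u₀ = 0) :
    iteratedDeriv 3 (φ ∘ r) u₀ = deriv φ (r u₀) * deriv (deriv (deriv r)) u₀ := by
  obtain ⟨hφ0, hφ1, hφ2, hφ3⟩ := unpack3 hV hφ
  obtain ⟨hr0, hr1, hr2, hr3⟩ := unpack3 hW hr
  set W' : Set ℝ := W ∩ r ⁻¹' V with hW'def
  have hW'open : IsOpen W' := (hr.continuousOn).isOpen_inter_preimage hW hV
  have hu₀' : u₀ ∈ W' := ⟨hu₀, hrV⟩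
  set A : ℝ → ℝ := fun u => deriv φ (r u) * deriv r u with hA
  set B : ℝ → ℝ := fun u =>
    deriv (deriv φ) (r u) * deriv r u * deriv r u + deriv φ (r u) * deriv (deriv r) u with hB
  have E1 : EqOn (deriv (φ ∘ r)) A W' := by
    intro u hu
    exact ((hφ0 _ hu.2).comp u (hr0 _ hu.1)).deriv
  have E2 : EqOn (deriv A) B W' := by
    intro u hu
    have hc : HasDerivAt (fun v => deriv φ (r v)) (deriv (deriv φ) (r u) * deriv r u) u :=
      (hφ1 _ hu.2).comp u (hr0 _ hu.1)
    have := hc.mul (hr1 _ hu.1)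
    show deriv ((fun v => deriv φ (r v)) * deriv r) u = B u
    rw [this.deriv]
  have ev1 : deriv (φ ∘ r) =ᶠ[𝓝 u₀] A := E1.eventuallyEq_of_mem (hW'open.mem_nhds hu₀')
  have ev2 : deriv A =ᶠ[𝓝 u₀] B := E2.eventuallyEq_of_mem (hW'open.mem_nhds hu₀')
  have hdB : HasDerivAt B
      ((deriv (deriv (deriv φ)) (r u₀) * deriv r u₀ * deriv r u₀ +
        deriv (deriv φ) (r u₀) * deriv (deriv r) u₀) * deriv r u₀ +
        deriv (deriv φ) (r u₀) * deriv r u₀ * deriv (deriv r) u₀ +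
       ((deriv (deriv φ) (r u₀) * deriv r u₀) * deriv (deriv r) u₀ +
        deriv φ (r u₀) * deriv (deriv (deriv r)) u₀)) u₀ := by
    have hφ2r : HasDerivAt (fun v => deriv (deriv φ) (r v))
        (deriv (deriv (deriv φ)) (r u₀) * deriv r u₀) u₀ := (hφ2 _ hrV).comp u₀ (hr0 _ hu₀)
    have hφ1r : HasDerivAt (fun v => deriv φ (r v))
        (deriv (deriv φ) (r u₀) * deriv r u₀) u₀ := (hφ1 _ hrV).comp u₀ (hr0 _ hu₀)
    exact ((hφ2r.mul (hr1 _ hu₀)).mul (hr1 _ hu₀)).add (hφ1r.mul (hr2 _ hu₀))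
  have h3 : iteratedDeriv 3 (φ ∘ r) u₀ = deriv (deriv (deriv (φ ∘ r))) u₀ := by
    simp [iteratedDeriv_succ, iteratedDeriv_zero]
  rw [h3, (ev1.deriv.deriv_eq), ev2.deriv_eq, hdB.deriv, hr']
  ring


/-- The third derivative of `m_x` at the origin. -/
theorem statement12 (I : Set ℝ) (hIopen : IsOpen I) (hIne : I.Nonempty)
    (hIconn : I.OrdConnected)
    (f g : ℝ → ℝ) (hfg : ClassC 3 I f g)
    (μ : Measure ℝ) [IsProbabilityMeasure μ] (hsupp : μ (Set.Icc (0:ℝ) 1)ᶜ = 0) :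
    ∀ x ∈ I,
      ContDiffAt ℝ 3 (mfun I f g μ x) 0 ∧
      iteratedDeriv 3 (mfun I f g μ x) 0
        = cmom μ 3 * (deriv (Phi f g) x + Phi f g x ^ 2 + Psi f g x) := by
  intro x hx
  obtain ⟨hf3, hg3, hgpos, hWne⟩ := hfg
  have hf3' : ContDiffOn ℝ 3 f I := by exact_mod_cast hf3
  have hg3' : ContDiffOn ℝ 3 g I := by exact_mod_cast hg3
  -- measure facts
  have hI1 : μ (Icc (0:ℝ) 1) = 1 := by
    have h := measure_add_measure_compl (μ := μ) (measurableSet_Icc (a := (0:ℝ)) (b := 1))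
    rw [hsupp, add_zero, measure_univ] at h
    exact h
  haveI hνprob : IsProbabilityMeasure (μ.restrict (Icc (0:ℝ) 1)) :=
    ⟨by rw [Measure.restrict_apply_univ]; exact hI1⟩
  set c : ℝ := mom1 μ with hc
  have hInt_id : IntegrableOn (fun t : ℝ => t) (Icc (0:ℝ) 1) μ :=
    continuous_id.integrableOn_Icc
  have hc0 : 0 ≤ c := by
    rw [hc, mom1]
    apply integral_nonneg_of_ae
    filter_upwards [ae_restrict_mem measurableSet_Icc] with t ht
    exact ht.1
  have hc1 : c ≤ 1 := by
    rw [hc, mom1]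
    calc ∫ t in Icc (0:ℝ) 1, t ∂μ ≤ ∫ _t in Icc (0:ℝ) 1, (1:ℝ) ∂μ := by
          apply integral_mono_ae hInt_id (integrable_const 1)
          filter_upwards [ae_restrict_mem measurableSet_Icc] with t ht
          exact ht.2
      _ = 1 := by simp
  have habs : ∀ t ∈ Icc (0:ℝ) 1, |t - c| ≤ 1 := by
    intro t ht
    rw [abs_le]
    constructor <;> [linarith [ht.1]; linarith [ht.2]]
  have hcm0 : cmom μ 0 = 1 := by simp [cmom]
  have hcm1 : cmom μ 1 = 0 := by
    rw [cmom]
    simp only [pow_one]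
    rw [integral_sub hInt_id (integrable_const _)]
    simp [mom1]
  -- geometry
  obtain ⟨ε, hεpos, hεball⟩ := Metric.isOpen_iff.1 hIopen x hx
  set δ := ε/2 with hδdef
  have hδpos : 0 < δ := by positivity
  have hK : Icc (x-δ) (x+δ) ⊆ I := by
    rw [← Real.closedBall_eq_Icc]
    exact (Metric.closedBall_subset_ball (by linarith)).trans hεball
  -- derivative chains for f and g on I
  obtain ⟨hfd0, hfd1, hfd2, hfd3c⟩ := unpack3 hIopen hf3'
  obtain ⟨hgd0, hgd1, hgd2, hgd3c⟩ := unpack3 hIopen hg3'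
  have hfc0 : ContinuousOn f I := fun y hy => (hfd0 y hy).continuousAt.continuousWithinAt
  have hfc1 : ContinuousOn (deriv f) I := fun y hy => (hfd1 y hy).continuousAt.continuousWithinAt
  have hfc2 : ContinuousOn (deriv (deriv f)) I :=
    fun y hy => (hfd2 y hy).continuousAt.continuousWithinAt
  have hgc0 : ContinuousOn g I := fun y hy => (hgd0 y hy).continuousAt.continuousWithinAt
  have hgc1 : ContinuousOn (deriv g) I := fun y hy => (hgd1 y hy).continuousAt.continuousWithinAt
  have hgc2 : ContinuousOn (deriv (deriv g)) I :=
    fun y hy => (hgd2 y hy).continuousAt.continuousWithinAt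
  -- the integral means
  set nf0 : ℝ → ℝ := fun u => ∫ t in Icc (0:ℝ) 1, f (x + (t - c) * u) * (t - c)^0 ∂μ with hnf0def
  set nf1 : ℝ → ℝ := fun u => ∫ t in Icc (0:ℝ) 1, deriv f (x + (t - c) * u) * (t - c)^1 ∂μ with hnf1def
  set nf2 : ℝ → ℝ := fun u => ∫ t in Icc (0:ℝ) 1, deriv (deriv f) (x + (t - c) * u) * (t - c)^2 ∂μ with hnf2def
  set nf3 : ℝ → ℝ := fun u => ∫ t in Icc (0:ℝ) 1, deriv (deriv (deriv f)) (x + (t - c) * u) * (t - c)^3 ∂μ with hnf3def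
  set ng0 : ℝ → ℝ := fun u => ∫ t in Icc (0:ℝ) 1, g (x + (t - c) * u) * (t - c)^0 ∂μ with hng0def
  set ng1 : ℝ → ℝ := fun u => ∫ t in Icc (0:ℝ) 1, deriv g (x + (t - c) * u) * (t - c)^1 ∂μ with hng1def
  set ng2 : ℝ → ℝ := fun u => ∫ t in Icc (0:ℝ) 1, deriv (deriv g) (x + (t - c) * u) * (t - c)^2 ∂μ with hng2def
  set ng3 : ℝ → ℝ := fun u => ∫ t in Icc (0:ℝ) 1, deriv (deriv (deriv g)) (x + (t - c) * u) * (t - c)^3 ∂μ with hng3def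
  have hball_abs : ∀ u ∈ ball (0:ℝ) δ, |u| < δ := by
    intro u hu; simpa [Real.dist_eq] using hu
  have hnf0d : ∀ u ∈ ball (0:ℝ) δ, HasDerivAt nf0 (nf1 u) u := fun u hu =>
    intDeriv μ hδpos habs (fun y hy => hfd0 y (hK hy)) (hfc0.mono hK) (hfc1.mono hK) 0 (hball_abs u hu)
  have hnf1d : ∀ u ∈ ball (0:ℝ) δ, HasDerivAt nf1 (nf2 u) u := fun u hu =>
    intDeriv μ hδpos habs (fun y hy => hfd1 y (hK hy)) (hfc1.mono hK) (hfc2.mono hK) 1 (hball_abs u hu)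
  have hnf2d : ∀ u ∈ ball (0:ℝ) δ, HasDerivAt nf2 (nf3 u) u := fun u hu =>
    intDeriv μ hδpos habs (fun y hy => hfd2 y (hK hy)) (hfc2.mono hK) (hfd3c.mono hK) 2 (hball_abs u hu)
  have hnf3c : ContinuousOn nf3 (ball (0:ℝ) δ) := fun u hu =>
    (intCont μ hδpos habs (hfd3c.mono hK) 3 (hball_abs u hu)).continuousWithinAt
  have hng0d : ∀ u ∈ ball (0:ℝ) δ, HasDerivAt ng0 (ng1 u) u := fun u hu =>
    intDeriv μ hδpos habs (fun y hy => hgd0 y (hK hy)) (hgc0.mono hK) (hgc1.mono hK) 0 (hball_abs u hu)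
  have hng1d : ∀ u ∈ ball (0:ℝ) δ, HasDerivAt ng1 (ng2 u) u := fun u hu =>
    intDeriv μ hδpos habs (fun y hy => hgd1 y (hK hy)) (hgc1.mono hK) (hgc2.mono hK) 1 (hball_abs u hu)
  have hng2d : ∀ u ∈ ball (0:ℝ) δ, HasDerivAt ng2 (ng3 u) u := fun u hu =>
    intDeriv μ hδpos habs (fun y hy => hgd2 y (hK hy)) (hgc2.mono hK) (hgd3c.mono hK) 2 (hball_abs u hu)
  have hng3c : ContinuousOn ng3 (ball (0:ℝ) δ) := fun u hu =>
    (intCont μ hδpos habs (hgd3c.mono hK) 3 (hball_abs u hu)).continuousWithinAt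
  have hnfCD : ContDiffOn ℝ 3 nf0 (ball (0:ℝ) δ) := pack3 isOpen_ball hnf0d hnf1d hnf2d hnf3c
  have hngCD : ContDiffOn ℝ 3 ng0 (ball (0:ℝ) δ) := pack3 isOpen_ball hng0d hng1d hng2d hng3c
  -- values at 0
  have hval : ∀ (F : ℝ → ℝ) (k : ℕ),
      (∫ t in Icc (0:ℝ) 1, F (x + (t - c) * 0) * (t - c)^k ∂μ) = F x * cmom μ k := by
    intro F k
    simp only [mul_zero, add_zero]
    rw [MeasureTheory.integral_const_mul, cmom, ← hc]
  have hnf00 : nf0 0 = f x := by rw [hnf0def]; simp only []; rw [hval f 0, hcm0, mul_one]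
  have hnf10 : nf1 0 = 0 := by rw [hnf1def]; simp only []; rw [hval (deriv f) 1, hcm1, mul_zero]
  have hnf30 : nf3 0 = deriv (deriv (deriv f)) x * cmom μ 3 := by
    rw [hnf3def]; simp only []; rw [hval (deriv (deriv (deriv f))) 3]
  have hng00 : ng0 0 = g x := by rw [hng0def]; simp only []; rw [hval g 0, hcm0, mul_one]
  have hng10 : ng1 0 = 0 := by rw [hng1def]; simp only []; rw [hval (deriv g) 1, hcm1, mul_zero]
  have hng30 : ng3 0 = deriv (deriv (deriv g)) x * cmom μ 3 := by
    rw [hng3def]; simp only []; rw [hval (deriv (deriv (deriv g))) 3]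
  -- the quotient of means
  have hgx : 0 < g x := hgpos x hx
  set r : ℝ → ℝ := fun u => nf0 u / ng0 u with hrdef
  set s' : Set ℝ := ball (0:ℝ) δ ∩ ng0 ⁻¹' {0}ᶜ with hs'def
  have hs'open : IsOpen s' :=
    (hngCD.continuousOn).isOpen_inter_preimage isOpen_ball isOpen_compl_singleton
  have h0ball : (0:ℝ) ∈ ball (0:ℝ) δ := mem_ball_self hδpos
  have h0s' : (0:ℝ) ∈ s' := ⟨h0ball, by simp [hng00]; exact hgx.ne'⟩
  have hs'sub : s' ⊆ ball (0:ℝ) δ := inter_subset_left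
  have hs'ne : ∀ u ∈ s', ng0 u ≠ 0 := fun u hu => by simpa using hu.2
  have hrCD : ContDiffOn ℝ 3 r s' := by
    have := (hnfCD.mono hs'sub).div (hngCD.mono hs'sub) hs'ne
    exact this
  -- the function h = f/g
  set h : ℝ → ℝ := fun y => f y / g y with hhdef
  have hW' : ∀ y ∈ I, deriv f y * g y - f y * deriv g y ≠ 0 := by
    intro y hy
    have := hWne y hy
    simpa [Wr, iteratedDeriv_one, iteratedDeriv_zero] using this
  have hdh : ∀ y ∈ I, HasDerivAt h ((deriv f y * g y - f y * deriv g y) / g y^2) y :=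
    fun y hy => (hfd0 y hy).div (hgd0 y hy) (hgpos y hy).ne'
  have hderivh : ∀ y ∈ I, deriv h y = (deriv f y * g y - f y * deriv g y) / g y^2 :=
    fun y hy => (hdh y hy).deriv
  have hdhne : deriv h x ≠ 0 := by
    rw [hderivh x hx]
    exact div_ne_zero (hW' x hx) (pow_ne_zero _ hgx.ne')
  -- injectivity of h on I
  have hConv : Convex ℝ I := hIconn.convex
  have hConth : ContinuousOn h I := hfc0.div hgc0 (fun y hy => (hgpos y hy).ne')
  have hwCont : ContinuousOn (fun y => deriv f y * g y - f y * deriv g y) I :=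
    (hfc1.mul hgc0).sub (hfc0.mul hgc1)
  have hinj : InjOn h I := by
    rcases lt_or_gt_of_ne (hW' x hx) with hneg | hpos
    · have hall : ∀ y ∈ I, 0 < -(deriv f y * g y - f y * deriv g y) :=
        signConst hIconn hwCont.neg (fun y hy => neg_ne_zero.2 (hW' y hy)) hx (by linarith)
      have : StrictAntiOn h I := by
        apply strictAntiOn_of_deriv_neg hConv hConth
        intro y hy
        rw [hIopen.interior_eq] at hy
        rw [hderivh y hy]
        exact div_neg_of_neg_of_pos (by linarith [hall y hy]) (pow_pos (hgpos y hy) 2)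
      exact this.injOn
    · have hall := signConst hIconn hwCont hW' hx hpos
      have : StrictMonoOn h I := by
        apply strictMonoOn_of_deriv_pos hConv hConth
        intro y hy
        rw [hIopen.interior_eq] at hy
        rw [hderivh y hy]
        exact div_pos (hall y hy) (pow_pos (hgpos y hy) 2)
      exact this.injOn
  -- local inverse of h
  have hCDh : ContDiffAt ℝ 3 h x :=
    (hf3'.contDiffAt (hIopen.mem_nhds hx)).div (hg3'.contDiffAt (hIopen.mem_nhds hx)) hgx.ne'
  have hS : HasStrictDerivAt h (deriv h x) x := hCDh.hasStrictDerivAt (by norm_num)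
  have hE : HasStrictFDerivAt h
      (↑(ContinuousLinearEquiv.unitsEquivAut ℝ (Units.mk0 (deriv h x) hdhne)) : ℝ →L[ℝ] ℝ) x :=
    hS.hasStrictFDerivAt_equiv hdhne
  set φ : ℝ → ℝ := hE.localInverse h _ x with hφdef
  have hrinv : ∀ᶠ z in 𝓝 (h x), h (φ z) = z := hE.eventually_right_inverse
  have hφcont : ContinuousAt φ (h x) := hE.localInverse_continuousAt
  have hφx : φ (h x) = x := hE.localInverse_apply_image
  have hφCD : ContDiffAt ℝ 3 φ (h x) := by
    have := hCDh.to_localInverse (f' := ContinuousLinearEquiv.unitsEquivAut ℝ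
      (Units.mk0 (deriv h x) hdhne)) hE.hasFDerivAt (by norm_num)
    exact this
  have hφderiv : deriv φ (h x) = (deriv h x)⁻¹ := by
    have : HasStrictDerivAt φ (deriv h x)⁻¹ (h x) := hS.to_localInverse hdhne
    exact this.hasDerivAt.deriv
  -- mfun in terms of r
  have hmeq : ∀ u, mfun I f g μ x u = Function.invFunOn h I (r u) := by
    intro u
    have e1 : (∫ t in Icc (0:ℝ) 1, f (t * (x + (1 - mom1 μ) * u) + (1 - t) * (x - mom1 μ * u)) ∂μ)
        = nf0 u := by
      rw [hnf0def]
      apply integral_congr_ae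
      filter_upwards with t
      rw [pow_zero, mul_one]
      congr 1
      rw [hc]
      ring
    have e2 : (∫ t in Icc (0:ℝ) 1, g (t * (x + (1 - mom1 μ) * u) + (1 - t) * (x - mom1 μ * u)) ∂μ)
        = ng0 u := by
      rw [hng0def]
      apply integral_congr_ae
      filter_upwards with t
      rw [pow_zero, mul_one]
      congr 1
      rw [hc]
      ring
    rw [mfun, Mmean, e1, e2]
  have hr0val : r 0 = h x := by
    show nf0 0 / ng0 0 = f x / g x
    rw [hnf00, hng00]
  -- eventual equality between mfun and the local-inverse composition
  have hrCA : ContinuousAt r 0 := hrCD.continuousOn.continuousAt (hs'open.mem_nhds h0s')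
  have hIev : ∀ᶠ z in 𝓝 (h x), φ z ∈ I :=
    hφcont.preimage_mem_nhds (by rw [hφx]; exact hIopen.mem_nhds hx)
  have hev : ∀ᶠ z in 𝓝 (h x), h (φ z) = z ∧ φ z ∈ I := hrinv.and hIev
  have hevu : ∀ᶠ u in 𝓝 (0:ℝ), h (φ (r u)) = r u ∧ φ (r u) ∈ I := by
    have h2 : Filter.Tendsto r (𝓝 0) (𝓝 (h x)) := by
      rw [← hr0val]; exact hrCA
    exact h2.eventually hev
  have hmq : mfun I f g μ x =ᶠ[𝓝 (0:ℝ)] fun u => φ (r u) := by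
    filter_upwards [hevu] with u hu
    rw [hmeq u]
    have hex : ∃ a ∈ I, h a = r u := ⟨φ (r u), hu.2, hu.1⟩
    have h1 := Function.invFunOn_eq hex
    have h2 := Function.invFunOn_mem hex
    exact hinj h2 hu.2 (by rw [h1, hu.1])
  have hrCA3 : ContDiffAt ℝ 3 r 0 := hrCD.contDiffAt (hs'open.mem_nhds h0s')
  have hφCD' : ContDiffAt ℝ 3 φ (r 0) := by rw [hr0val]; exact hφCD
  have hcomp : ContDiffAt ℝ 3 (fun u => φ (r u)) 0 := ContDiffAt.comp 0 hφCD' hrCA3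
  refine ⟨hcomp.congr_of_eventuallyEq hmq, ?_⟩
  -- derivatives of r at 0
  have hrng : EqOn (fun u => r u * ng0 u) nf0 s' := by
    intro u hu
    show nf0 u / ng0 u * ng0 u = nf0 u
    exact div_mul_cancel₀ _ (hs'ne u hu)
  obtain ⟨hr0d, hr1d, hr2d, _⟩ := unpack3 hs'open hrCD
  have q1eq : ∀ u ∈ s', nf1 u = deriv r u * ng0 u + r u * ng1 u := by
    intro u hu
    have hprod : HasDerivAt (fun u => r u * ng0 u) (deriv r u * ng0 u + r u * ng1 u) u :=
      (hr0d u hu).mul (hng0d u (hs'sub hu))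
    have e := hrng.eventuallyEq_of_mem (hs'open.mem_nhds hu)
    rw [← (hnf0d u (hs'sub hu)).deriv, ← e.deriv_eq, hprod.deriv]
  have hr'0 : deriv r 0 = 0 := by
    have h1 := q1eq 0 h0s'
    rw [hnf10, hng10, hng00, mul_zero, add_zero] at h1
    rcases mul_eq_zero.1 h1.symm with h2 | h2
    · exact h2
    · exact absurd h2 hgx.ne'
  set q1 : ℝ → ℝ := fun u => deriv r u * ng0 u + r u * ng1 u with hq1def
  have q2eq : ∀ u ∈ s', nf2 u = (deriv (deriv r) u * ng0 u + deriv r u * ng1 u)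
      + (deriv r u * ng1 u + r u * ng2 u) := by
    intro u hu
    have hq1d : HasDerivAt q1 ((deriv (deriv r) u * ng0 u + deriv r u * ng1 u)
        + (deriv r u * ng1 u + r u * ng2 u)) u :=
      ((hr1d u hu).mul (hng0d u (hs'sub hu))).add ((hr0d u hu).mul (hng1d u (hs'sub hu)))
    have e : q1 =ᶠ[𝓝 u] nf1 :=
      EqOn.eventuallyEq_of_mem (fun v hv => (q1eq v hv).symm) (hs'open.mem_nhds hu)
    rw [← (hnf1d u (hs'sub hu)).deriv, ← e.deriv_eq, hq1d.deriv]
  set q2 : ℝ → ℝ := fun u => (deriv (deriv r) u * ng0 u + deriv r u * ng1 u)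
      + (deriv r u * ng1 u + r u * ng2 u) with hq2def
  have hq2d : HasDerivAt q2
      ((((deriv (deriv (deriv r)) 0 * ng0 0 + deriv (deriv r) 0 * ng1 0)
        + (deriv (deriv r) 0 * ng1 0 + deriv r 0 * ng2 0))
        + ((deriv (deriv r) 0 * ng1 0 + deriv r 0 * ng2 0)
        + (deriv r 0 * ng2 0 + r 0 * ng3 0)))) 0 :=
    ((((hr2d 0 h0s').mul (hng0d 0 h0ball)).add ((hr1d 0 h0s').mul (hng1d 0 h0ball))).add
      ((((hr1d 0 h0s').mul (hng1d 0 h0ball))).add ((hr0d 0 h0s').mul (hng2d 0 h0ball))))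
  have e2ev : q2 =ᶠ[𝓝 (0:ℝ)] nf2 :=
    EqOn.eventuallyEq_of_mem (fun v hv => (q2eq v hv).symm) (hs'open.mem_nhds h0s')
  have hnf3eq : nf3 0 = deriv (deriv (deriv r)) 0 * g x + r 0 * ng3 0 := by
    rw [← (hnf2d 0 h0ball).deriv, ← e2ev.deriv_eq, hq2d.deriv, hr'0, hng10, hng00]
    ring
  have hr00 : r 0 = f x / g x := by
    show nf0 0 / ng0 0 = f x / g x
    rw [hnf00, hng00]
  have hd3r : deriv (deriv (deriv r)) 0
      = (deriv (deriv (deriv f)) x * cmom μ 3 - (f x / g x) * (deriv (deriv (deriv g)) x * cmom μ 3)) / g x := by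
    rw [hnf30, hng30, hr00] at hnf3eq
    field_simp at hnf3eq ⊢
    linarith
  -- third derivative via the composition lemma
  obtain ⟨V₀, hV₀nhds, hφV₀⟩ := hφCD.contDiffOn (le_refl _) (by simp)
  obtain ⟨V, hVsub, hVopen, hVmem⟩ := _root_.mem_nhds_iff.1 hV₀nhds
  have hφV : ContDiffOn ℝ 3 φ V := hφV₀.mono hVsub
  have hitd : iteratedDeriv 3 (fun u => φ (r u)) 0
      = deriv φ (r 0) * deriv (deriv (deriv r)) 0 := by
    have := comp3 hVopen (by rw [hr0val]; exact hVmem) hφV hs'open h0s' hrCD hr'0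
    exact this
  have hiter : iteratedDeriv 3 (mfun I f g μ x) 0 = iteratedDeriv 3 (fun u => φ (r u)) 0 :=
    (evIteratedDeriv 3 hmq).eq_of_nhds
  -- derivative of Phi
  have hPhiEq : Phi f g = fun y =>
      (deriv (deriv f) y * g y - f y * deriv (deriv g) y) /
        (deriv f y * g y - f y * deriv g y) := by
    funext y
    simp [Phi, Wr, iteratedDeriv_succ, iteratedDeriv_one, iteratedDeriv_zero]
  have hW20d : HasDerivAt (fun y => deriv (deriv f) y * g y - f y * deriv (deriv g) y)
      ((deriv (deriv (deriv f)) x * g x + deriv (deriv f) x * deriv g x)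
        - (deriv f x * deriv (deriv g) x + f x * deriv (deriv (deriv g)) x)) x :=
    ((hfd2 x hx).mul (hgd0 x hx)).sub ((hfd0 x hx).mul (hgd2 x hx))
  have hW10d : HasDerivAt (fun y => deriv f y * g y - f y * deriv g y)
      ((deriv (deriv f) x * g x + deriv f x * deriv g x)
        - (deriv f x * deriv g x + f x * deriv (deriv g) x)) x :=
    ((hfd1 x hx).mul (hgd0 x hx)).sub ((hfd0 x hx).mul (hgd1 x hx))
  have hPhid : HasDerivAt (Phi f g)
      ((((deriv (deriv (deriv f)) x * g x + deriv (deriv f) x * deriv g x)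
        - (deriv f x * deriv (deriv g) x + f x * deriv (deriv (deriv g)) x))
        * (deriv f x * g x - f x * deriv g x)
        - (deriv (deriv f) x * g x - f x * deriv (deriv g) x)
        * ((deriv (deriv f) x * g x + deriv f x * deriv g x)
          - (deriv f x * deriv g x + f x * deriv (deriv g) x)))
        / (deriv f x * g x - f x * deriv g x)^2) x := by
    rw [hPhiEq]
    exact hW20d.div hW10d (hW' x hx)
  have hPhix : Phi f g x = (deriv (deriv f) x * g x - f x * deriv (deriv g) x) /
      (deriv f x * g x - f x * deriv g x) := by
    simp [Phi, Wr, iteratedDeriv_succ, iteratedDeriv_one, iteratedDeriv_zero]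
  have hPsix : Psi f g x = -((deriv (deriv f) x * deriv g x - deriv f x * deriv (deriv g) x) /
      (deriv f x * g x - f x * deriv g x)) := by
    simp [Psi, Wr, iteratedDeriv_succ, iteratedDeriv_one, iteratedDeriv_zero]
  rw [hiter, hitd, hr0val, hφderiv, hd3r, hderivh x hx, hPhid.deriv, hPhix, hPsix]
  have hWx := hW' x hx
  field_simp
  ring
end
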